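/- arXiv:1801.03908 — 8 statements merged into one kernel-verified Lean document; each statement's English description precedes it below -/
import Mathlib

section
/- A group G admits a homogeneous length function if and only if G is abelian and torsion-free. -/
set_option maxHeartbeats 1000000
set_option linter.unusedSectionVars false

noncomputable section HomogeneousLengthAux

section ForwardA


variable {G : Type*} [Group G] (ℓ : G → ℝ)
  (h0 : ∀ x : G, 0 ≤ ℓ x)
  (h1 : ℓ 1 = 0)
  (hi : ∀ x : G, ℓ x⁻¹ = ℓ x)
  (hs : ∀ x y : G, ℓ (x * y) ≤ ℓ x + ℓ y)
  (hh : ∀ (x : G) (n : ℤ), ℓ (x ^ n) = |(n : ℝ)| * ℓ x)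

private lemma le_of_nat_bound' {a b c : ℝ} (h : ∀ n : ℕ, (n : ℝ) * a ≤ c + (n : ℝ) * b) : a ≤ b := by
  by_contra hab
  push_neg at hab
  obtain ⟨n, hn⟩ := exists_nat_gt (c / (a - b))
  have hε : 0 < a - b := by linarith
  have h2 : c / (a - b) * (a - b) < n * (a - b) := mul_lt_mul_of_pos_right hn hε
  rw [div_mul_cancel₀ _ (ne_of_gt hε)] at h2
  have := h n
  nlinarith

include hi hs hh in
private lemma conj_le' (g w : G) : ℓ (g * w * g⁻¹) ≤ ℓ w := by
  apply le_of_nat_bound' (c := 2 * ℓ g)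
  intro n
  have e1 : ((g * w * g⁻¹) ^ (n : ℤ)) = g * w ^ (n : ℤ) * g⁻¹ := conj_zpow
  have e2 := hh (g * w * g⁻¹) n
  rw [e1] at e2
  have e3 : ℓ (g * w ^ (n:ℤ) * g⁻¹) ≤ ℓ g + ℓ (w ^ (n:ℤ)) + ℓ g⁻¹ :=
    le_trans (hs _ _) (by linarith [hs g (w ^ (n:ℤ))])
  rw [hi, hh w n] at e3
  have hcast : |((n:ℤ):ℝ)| = (n:ℝ) := by simp
  rw [hcast] at e2 e3
  linarith

include hi hs hh in
private lemma conj_inv' (g w : G) : ℓ (g * w * g⁻¹) = ℓ w := by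
  apply le_antisymm (conj_le' ℓ hi hs hh g w)
  have := conj_le' ℓ hi hs hh g⁻¹ (g * w * g⁻¹)
  calc ℓ w = ℓ (g⁻¹ * (g * w * g⁻¹) * g⁻¹⁻¹) := by group
  _ ≤ ℓ (g * w * g⁻¹) := this

include hi hs hh in
private lemma cyc' (u v : G) : ℓ (u * v) = ℓ (v * u) := by
  have := conj_inv' ℓ hi hs hh u (v * u)
  calc ℓ (u * v) = ℓ (u * (v * u) * u⁻¹) := by group
  _ = ℓ (v * u) := this

include hi hs hh in
private lemma Kin' (w u : G) : 2 * ℓ w ≤ ℓ (w * u) + ℓ (w * u⁻¹) := by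
  have e1 : ℓ (w ^ (2:ℤ)) = 2 * ℓ w := by rw [hh]; norm_num
  have e2 : w ^ (2:ℤ) = (w * u) * (u⁻¹ * w) := by
    rw [zpow_two]; group
  have e3 : ℓ ((w*u) * (u⁻¹*w)) ≤ ℓ (w*u) + ℓ (u⁻¹*w) := hs _ _
  have e4 : ℓ (u⁻¹ * w) = ℓ (w * u⁻¹) := cyc' ℓ hi hs hh u⁻¹ w
  rw [← e1, e2]
  linarith

-- gambler's ruin / convexity lemma
private lemma GR' (h : ℤ → ℝ) (subh : ∀ j : ℤ, 2 * h j ≤ h (j+1) + h (j-1)) (M : ℕ) :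
    (M : ℝ) * h (-1) ≤ ((M : ℝ) - 1) * h 0 + h (-(M:ℤ)) := by
  have dm : ∀ k : ℕ, h (-(k:ℤ)) - h (-(k:ℤ)-1) ≤ h 0 - h (-1) := by
    intro k
    induction k with
    | zero => simp
    | succ k ih =>
      have := subh (-(k:ℤ)-1)
      have e : (-(↑(k+1)):ℤ) = -(k:ℤ)-1 := by push_cast; ring
      rw [e]
      have e2 : (-(k:ℤ)-1+1) = -(k:ℤ) := by ring
      rw [e2] at this
      linarith
  induction M with
  | zero => simp
  | succ M ih =>
    have := dm M
    push_cast
    have e : (-(↑(M+1)):ℤ) = -(M:ℤ)-1 := by push_cast; ring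
    have e2 : h (-(↑(M+1)):ℤ) = h (-(M:ℤ)-1) := by rw [e]
    push_cast at e2 ih ⊢
    linarith

-- Cauchy-Schwarz two-term
private lemma cs2' (p r a b : ℝ) (hp : 0 ≤ p) (hr : 0 ≤ r) (ha : 0 ≤ a) (hb : 0 ≤ b) :
    p * Real.sqrt a + r * Real.sqrt b ≤ Real.sqrt ((p + r) * (p * a + r * b)) := by
  have h1 : 0 ≤ p * Real.sqrt a + r * Real.sqrt b :=
    add_nonneg (mul_nonneg hp (Real.sqrt_nonneg a)) (mul_nonneg hr (Real.sqrt_nonneg b))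
  have key : ∀ A B : ℝ, 0 ≤ A → 0 ≤ B → (p*A + r*B)^2 ≤ (p+r)*(p*A^2 + r*B^2) := by
    intro A B _ _
    nlinarith [mul_nonneg (mul_nonneg hp hr) (sq_nonneg (A - B))]
  have h2 : (p * Real.sqrt a + r * Real.sqrt b)^2 ≤ (p+r)*(p*a+r*b) := by
    have := key (Real.sqrt a) (Real.sqrt b) (Real.sqrt_nonneg a) (Real.sqrt_nonneg b)
    rwa [Real.sq_sqrt ha, Real.sq_sqrt hb] at this
  calc p * Real.sqrt a + r * Real.sqrt b = Real.sqrt ((p * Real.sqrt a + r * Real.sqrt b)^2) := (Real.sqrt_sq h1).symm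
  _ ≤ Real.sqrt ((p+r)*(p*a+r*b)) := Real.sqrt_le_sqrt h2


end ForwardA

section ForwardB
variable {G : Type*} [Group G] (ℓ : G → ℝ)
  (h0 : ∀ x : G, 0 ≤ ℓ x)
  (hi : ∀ x : G, ℓ x⁻¹ = ℓ x)
  (hs : ∀ x y : G, ℓ (x * y) ≤ ℓ x + ℓ y)
  (hh : ∀ (x : G) (n : ℤ), ℓ (x ^ n) = |(n : ℝ)| * ℓ x)
variable (conj_invH : ∀ g w : G, ℓ (g * w * g⁻¹) = ℓ w)

variable (KinH : ∀ w u : G, 2 * ℓ w ≤ ℓ (w * u) + ℓ (w * u⁻¹))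
variable (GRH : ∀ (h : ℤ → ℝ), (∀ j : ℤ, 2 * h j ≤ h (j+1) + h (j-1)) → ∀ (M : ℕ),
    (M : ℝ) * h (-1) ≤ ((M : ℝ) - 1) * h 0 + h (-(M:ℤ)))
variable (cs2H : ∀ p r a b : ℝ, 0 ≤ p → 0 ≤ r → 0 ≤ a → 0 ≤ b →
    p * Real.sqrt a + r * Real.sqrt b ≤ Real.sqrt ((p + r) * (p * a + r * b)))

include hi hs conj_invH in
private lemma peH (x y : G) (g' : G) (s t : ℤ) :
    ℓ (g' * (x * y^s * x⁻¹) * y^t) ≤ ℓ (g' * y^(s+t)) + 2 * ℓ x := by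
  have id1 : g' * (x*y^s*x⁻¹) * y^t
      = (g' * y^(s+t)) * ((y^(s+t))⁻¹ * (x * (y^s * x⁻¹ * y^(-s))) * y^(s+t)) := by group
  rw [id1]
  have b1 := hs (g' * y^(s+t)) ((y^(s+t))⁻¹ * (x * (y^s * x⁻¹ * y^(-s))) * y^(s+t))
  have c1 : ℓ ((y^(s+t))⁻¹ * (x * (y^s * x⁻¹ * y^(-s))) * y^(s+t))
      = ℓ (x * (y^s * x⁻¹ * y^(-s))) := by
    have := conj_invH (y^(s+t))⁻¹ (x * (y^s * x⁻¹ * y^(-s)))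
    simpa using this
  have c2 : ℓ (y^s * x⁻¹ * y^(-s)) = ℓ x⁻¹ := by
    have := conj_invH (y^s) x⁻¹
    rw [← zpow_neg] at this
    exact this
  have b2 : ℓ (x * (y^s * x⁻¹ * y^(-s))) ≤ ℓ x + ℓ (y^s * x⁻¹ * y^(-s)) := hs _ _
  rw [c2, hi] at b2
  linarith [b1, c1.le, c1.ge]

include h0 hi hs hh conj_invH KinH GRH cs2H in
private lemma main_indH (x y : G) (M : ℕ) (hM : 1 ≤ M) (D : ℝ) (hD : D = 2 * ℓ x / M) :
    ∀ (m : ℕ) (g : G) (A : ℝ) (Z K : ℤ),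
    (∀ s t : ℤ, ℓ (g * (x * y^s * x⁻¹) * y^t) ≤ A + |((Z + s + t : ℤ) : ℝ)| * ℓ y) →
    ℓ (g * (x * y^K * x⁻¹) * y^(-1:ℤ) * (x*y*x⁻¹*y⁻¹)^m) ≤
      A + D * m + (ℓ y) * (Real.sqrt ((((Z+K : ℤ)):ℝ)^2 + 2*(M:ℝ)*(m:ℝ)) + 1) := by
  have hMR : (1:ℝ) ≤ (M:ℝ) := by exact_mod_cast hM
  have hMpos : (0:ℝ) < (M:ℝ) := by linarith
  have hβ := h0 y
  have hα := h0 x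
  intro m
  induction m with
  | zero =>
    intro g A Z K hg
    have subh : ∀ j : ℤ, 2 * ℓ (g * (x*y^K*x⁻¹) * y^j) ≤
        ℓ (g * (x*y^K*x⁻¹) * y^(j+1)) + ℓ (g * (x*y^K*x⁻¹) * y^(j-1)) := by
      intro j
      have k := KinH (g * (x*y^K*x⁻¹) * y^j) y
      have e1 : (g * (x*y^K*x⁻¹) * y^j) * y = g * (x*y^K*x⁻¹) * y^(j+1) := by group
      have e2 : (g * (x*y^K*x⁻¹) * y^j) * y⁻¹ = g * (x*y^K*x⁻¹) * y^(j-1) := by group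
      rw [e1, e2] at k
      exact k
    have gr := GRH (fun l => ℓ (g * (x*y^K*x⁻¹) * y^l)) subh M
    have b0 : ℓ (g * (x*y^K*x⁻¹) * y^(0:ℤ)) ≤ A + |((Z+K : ℤ):ℝ)| * ℓ y := by
      have := hg K 0
      rwa [show (Z + K + 0 : ℤ) = (Z + K : ℤ) by ring] at this
    have bM : ℓ (g * (x*y^K*x⁻¹) * y^(-(M:ℤ))) ≤ A + (|((Z+K:ℤ):ℝ)| + M) * ℓ y := by
      have hb := hg K (-(M:ℤ))
      have habs : |((Z + K + -(M:ℤ) : ℤ) : ℝ)| ≤ |((Z+K:ℤ):ℝ)| + M := by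
        push_cast
        calc |((Z:ℝ) + K + -(M:ℝ))| ≤ |((Z:ℝ) + K)| + |(-(M:ℝ))| := abs_add_le _ _
        _ = |((Z:ℝ)+K)| + M := by rw [abs_neg, abs_of_nonneg (le_of_lt hMpos)]
      nlinarith [hb, habs]
    have goal_eq : g * (x * y^K * x⁻¹) * y^(-1:ℤ) * (x*y*x⁻¹*y⁻¹)^0 = g * (x*y^K*x⁻¹) * y^(-1:ℤ) := by
      rw [pow_zero, mul_one]
    rw [goal_eq]
    have esq : Real.sqrt ((((Z+K:ℤ)):ℝ)^2 + 2*(M:ℝ)*((0:ℕ):ℝ)) = |((Z+K:ℤ):ℝ)| := by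
      rw [show ((((Z+K:ℤ)):ℝ)^2 + 2*(M:ℝ)*((0:ℕ):ℝ)) = (((Z+K:ℤ)):ℝ)^2 by push_cast; ring,
        Real.sqrt_sq_eq_abs]
    rw [esq]
    set v1 := ℓ (g * (x*y^K*x⁻¹) * y^(-1:ℤ)) with hv1
    set v0 := ℓ (g * (x*y^K*x⁻¹) * y^(0:ℤ)) with hv0
    set vM := ℓ (g * (x*y^K*x⁻¹) * y^(-(M:ℤ))) with hvM
    clear_value v1 v0 vM
    set w := |((Z+K:ℤ):ℝ)| with hw
    have hwn : 0 ≤ w := abs_nonneg _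
    have key : (M:ℝ) * v1 ≤ (M:ℝ) * (A + D * ((0:ℕ):ℝ) + ℓ y * (w + 1)) := by
      push_cast
      nlinarith [gr, b0, bM, mul_le_mul_of_nonneg_left b0 (by linarith : (0:ℝ) ≤ (M:ℝ) - 1)]
    have := le_of_mul_le_mul_left key hMpos
    linarith
  | succ m ih =>
    intro g A Z K hg
    set C : G := (x*y*x⁻¹*y⁻¹)^(m+1) with hC
    have subh : ∀ j : ℤ, 2 * ℓ (g * (x*y^K*x⁻¹) * y^j * C) ≤
        ℓ (g * (x*y^K*x⁻¹) * y^(j+1) * C) + ℓ (g * (x*y^K*x⁻¹) * y^(j-1) * C) := by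
      intro j
      have k := KinH (g * (x*y^K*x⁻¹) * y^j * C) (C⁻¹ * y * C)
      have e1 : (g * (x*y^K*x⁻¹) * y^j * C) * (C⁻¹ * y * C) = g * (x*y^K*x⁻¹) * y^(j+1) * C := by group
      have e2 : (g * (x*y^K*x⁻¹) * y^j * C) * (C⁻¹ * y * C)⁻¹ = g * (x*y^K*x⁻¹) * y^(j-1) * C := by group
      rw [e1, e2] at k
      exact k
    have gr := GRH (fun l => ℓ (g * (x*y^K*x⁻¹) * y^l * C)) subh M
    -- bound for h 0
    have b0 : ℓ (g * (x*y^K*x⁻¹) * y^(0:ℤ) * C)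
        ≤ A + D * m + ℓ y * (Real.sqrt ((((Z+K:ℤ):ℝ)+1)^2 + 2*M*m) + 1) := by
      have e : g * (x*y^K*x⁻¹) * y^(0:ℤ) * C = g * (x*y^(K+1)*x⁻¹) * y^(-1:ℤ) * (x*y*x⁻¹*y⁻¹)^m := by
        rw [hC, pow_succ']
        generalize (x*y*x⁻¹*y⁻¹)^m = C'
        group
      rw [e]
      have := ih g A Z (K+1) hg
      have ecast : ((((Z+(K+1):ℤ)):ℝ))^2 = ((((Z+K:ℤ)):ℝ)+1)^2 := by push_cast; ring
      rwa [ecast] at this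
    -- bound for h (-M)
    have bM : ℓ (g * (x*y^K*x⁻¹) * y^(-(M:ℤ)) * C)
        ≤ (A + 2 * ℓ x) + D * m + ℓ y * (Real.sqrt ((((Z+K:ℤ):ℝ)+1-M)^2 + 2*M*m) + 1) := by
      set g' : G := g * (x*y^K*x⁻¹) * y^(-(M:ℤ)) with hg'def
      have hg' : ∀ s t : ℤ, ℓ (g' * (x * y^s * x⁻¹) * y^t)
          ≤ (A + 2 * ℓ x) + |((Z + K - M + s + t : ℤ) : ℝ)| * ℓ y := by
        intro s t
        have p1 := peH ℓ hi hs conj_invH x y g' s t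
        have e2 : g' * y^(s+t) = g * (x*y^K*x⁻¹) * y^(-(M:ℤ)+(s+t)) := by
          rw [hg'def]; group
        rw [e2] at p1
        have p2 := hg K (-(M:ℤ)+(s+t))
        have ecast : ((Z + K + (-(M:ℤ)+(s+t)) : ℤ)) = ((Z + K - M + s + t : ℤ)) := by ring
        rw [ecast] at p2
        linarith
      have e : g * (x*y^K*x⁻¹) * y^(-(M:ℤ)) * C
          = g' * (x*y^(1:ℤ)*x⁻¹) * y^(-1:ℤ) * (x*y*x⁻¹*y⁻¹)^m := by
        rw [hg'def, hC, pow_succ']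
        generalize (x*y*x⁻¹*y⁻¹)^m = C'
        group
      rw [e]
      have := ih g' (A + 2*ℓ x) (Z + K - M) 1 hg'
      have ecast : ((((Z+K-M+1:ℤ)):ℝ))^2 = ((((Z+K:ℤ)):ℝ)+1-M)^2 := by push_cast; ring
      rwa [ecast] at this
    -- combine
    have goal_eq : g * (x * y^K * x⁻¹) * y^(-1:ℤ) * (x*y*x⁻¹*y⁻¹)^(m+1)
        = g * (x*y^K*x⁻¹) * y^(-1:ℤ) * C := by rw [hC]
    rw [goal_eq]
    set w : ℝ := ((Z+K:ℤ):ℝ) with hwdef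
    set u1 : ℝ := (w+1)^2 + 2*M*m with hu1
    set u2 : ℝ := (w+1-M)^2 + 2*M*m with hu2
    set uT : ℝ := w^2 + 2*(M:ℝ)*((m+1:ℕ):ℝ) with huT
    have huTcast : uT = w^2 + 2*(M:ℝ)*((m:ℝ)+1) := by rw [huT]; push_cast; ring
    have hu1n : 0 ≤ u1 := by positivity
    have hu2n : 0 ≤ u2 := by positivity
    have hsq : ((M:ℝ)-1) * Real.sqrt u1 + Real.sqrt u2 ≤ (M:ℝ) * Real.sqrt uT := by
      have c := cs2H ((M:ℝ)-1) 1 u1 u2 (by linarith) (by norm_num) hu1n hu2n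
      have e1 : ((M:ℝ)-1) + 1 = (M:ℝ) := by ring
      rw [e1] at c
      rw [show ((M:ℝ)-1) * u1 + 1 * u2 = ((M:ℝ)-1) * u1 + u2 by ring] at c
      rw [show ((M:ℝ)-1) * Real.sqrt u1 + 1 * Real.sqrt u2 = ((M:ℝ)-1) * Real.sqrt u1 + Real.sqrt u2 by ring] at c
      have arith : (M:ℝ) * (((M:ℝ)-1) * u1 + u2) ≤ (M:ℝ)^2 * uT := by
        rw [hu1, hu2, huTcast]
        nlinarith [hMR]
      have c2 : Real.sqrt ((M:ℝ) * (((M:ℝ)-1) * u1 + u2)) ≤ Real.sqrt ((M:ℝ)^2 * uT) :=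
        Real.sqrt_le_sqrt arith
      have e3 : Real.sqrt ((M:ℝ)^2 * uT) = (M:ℝ) * Real.sqrt uT := by
        rw [Real.sqrt_mul (by positivity), Real.sqrt_sq (le_of_lt hMpos)]
      calc ((M:ℝ)-1) * Real.sqrt u1 + Real.sqrt u2 ≤ Real.sqrt ((M:ℝ) * (((M:ℝ)-1) * u1 + u2)) := c
      _ ≤ Real.sqrt ((M:ℝ)^2 * uT) := c2
      _ = (M:ℝ) * Real.sqrt uT := e3
    have hDM : D * (M:ℝ) = 2 * ℓ x := by
      rw [hD]; field_simp
    set v1 := ℓ (g * (x*y^K*x⁻¹) * y^(-1:ℤ) * C) with hv1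
    set v0 := ℓ (g * (x*y^K*x⁻¹) * y^(0:ℤ) * C) with hv0
    set vM := ℓ (g * (x*y^K*x⁻¹) * y^(-(M:ℤ)) * C) with hvM
    clear_value v1 v0 vM
    set S1 := Real.sqrt u1
    set S2 := Real.sqrt u2
    set ST := Real.sqrt uT
    have key : (M:ℝ) * v1 ≤ (M:ℝ) * (A + D*((m+1:ℕ):ℝ) + ℓ y * (ST + 1)) := by
      have m1 : ((M:ℝ) - 1) * v0 ≤ ((M:ℝ) - 1) * (A + D * m + ℓ y * (S1 + 1)) :=
        mul_le_mul_of_nonneg_left b0 (by linarith)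
      have m2 : ℓ y * (((M:ℝ)-1) * S1 + S2) ≤ ℓ y * ((M:ℝ) * ST) :=
        mul_le_mul_of_nonneg_left hsq hβ
      have ecast : ((m+1:ℕ):ℝ) = (m:ℝ)+1 := by push_cast; ring
      rw [ecast]
      nlinarith [gr, m1, bM, m2]
    have := le_of_mul_le_mul_left key hMpos
    linarith


end ForwardB

section ForwardC
variable {G : Type*} [Group G] (ℓ : G → ℝ)
  (h0 : ∀ x : G, 0 ≤ ℓ x)
  (h1 : ℓ 1 = 0)
  (hi : ∀ x : G, ℓ x⁻¹ = ℓ x)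
  (hs : ∀ x y : G, ℓ (x * y) ≤ ℓ x + ℓ y)
  (hh : ∀ (x : G) (n : ℤ), ℓ (x ^ n) = |(n : ℝ)| * ℓ x)
variable (peH : ∀ (x y : G) (g' : G) (s t : ℤ),
    ℓ (g' * (x * y^s * x⁻¹) * y^t) ≤ ℓ (g' * y^(s+t)) + 2 * ℓ x)
variable (main_indH : ∀ (x y : G) (M : ℕ), 1 ≤ M → ∀ (D : ℝ), D = 2 * ℓ x / M →
    ∀ (m : ℕ) (g : G) (A : ℝ) (Z K : ℤ),
    (∀ s t : ℤ, ℓ (g * (x * y^s * x⁻¹) * y^t) ≤ A + |((Z + s + t : ℤ) : ℝ)| * ℓ y) →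
    ℓ (g * (x * y^K * x⁻¹) * y^(-1:ℤ) * (x*y*x⁻¹*y⁻¹)^m) ≤
      A + D * m + (ℓ y) * (Real.sqrt ((((Z+K : ℤ)):ℝ)^2 + 2*(M:ℝ)*(m:ℝ)) + 1))

include h0 h1 hi hs hh peH main_indH in
private lemma comm_zero (x y : G) : ℓ (x*y*x⁻¹*y⁻¹) = 0 := by
  have hαnn : 0 ≤ ℓ x := h0 _
  have hβnn : 0 ≤ ℓ y := h0 _
  have hLnn : 0 ≤ ℓ (x*y*x⁻¹*y⁻¹) := h0 _
  have keybound : ∀ k : ℕ, 1 ≤ k → (k:ℝ) * ℓ (x*y*x⁻¹*y⁻¹) ≤ 4*(ℓ x) + 3*(ℓ y) := by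
    intro k hk
    have hkR : (1:ℝ) ≤ (k:ℝ) := by exact_mod_cast hk
    have hM : 1 ≤ k^2 := Nat.one_le_pow _ _ (by omega)
    have hg : ∀ s t : ℤ, ℓ ((1:G) * (x * y^s * x⁻¹) * y^t)
        ≤ 2*(ℓ x) + |((0 + s + t : ℤ) : ℝ)| * ℓ y := by
      intro s t
      have p1 := peH x y 1 s t
      simp only [one_mul] at p1 ⊢
      have p2 : ℓ (y^(s+t)) = |((s+t : ℤ):ℝ)| * ℓ y := hh y (s+t)
      have ecast : ((0 + s + t : ℤ):ℝ) = ((s+t : ℤ):ℝ) := by push_cast; ring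
      rw [ecast]
      linarith [p1, p2.le]
    have hm := main_indH x y (k^2) hM (2*(ℓ x)/((k^2 : ℕ):ℝ)) rfl (k^4 - 1) 1 (2*(ℓ x)) 0 1 hg
    have hn4 : 1 ≤ k^4 := Nat.one_le_pow _ _ (by omega)
    have eword : (1:G) * (x * y^(1:ℤ) * x⁻¹) * y^(-1:ℤ) * (x*y*x⁻¹*y⁻¹)^(k^4-1)
        = (x*y*x⁻¹*y⁻¹)^(k^4) := by
      obtain ⟨m, hm'⟩ : ∃ m, k^4 = m + 1 := ⟨k^4-1, by omega⟩
      rw [hm']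
      simp only [Nat.add_sub_cancel]
      rw [pow_succ']
      generalize (x*y*x⁻¹*y⁻¹)^m = C'
      group
    rw [eword] at hm
    have epow : ℓ ((x*y*x⁻¹*y⁻¹)^(k^4 : ℕ)) = ((k^4 : ℕ) : ℝ) * ℓ (x*y*x⁻¹*y⁻¹) := by
      have hpow := hh (x*y*x⁻¹*y⁻¹) ((k^4 : ℕ) : ℤ)
      rw [zpow_natCast] at hpow
      rw [hpow]
      congr 1
      rw [Int.cast_natCast, Nat.abs_cast]
    rw [epow] at hm
    rw [show ((k^4:ℕ):ℝ) = (k:ℝ)^4 by push_cast; ring] at hm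
    have hkpos : (0:ℝ) < (k:ℝ) := by linarith
    have e1 : ((0 + 1 : ℤ):ℝ) = 1 := by norm_num
    rw [e1] at hm
    have hcast2 : ((k^2 : ℕ):ℝ) = (k:ℝ)^2 := by push_cast; ring
    have hcast4 : ((k^4 - 1 : ℕ):ℝ) = (k:ℝ)^4 - 1 := by
      rw [Nat.cast_sub hn4]
      push_cast; ring
    rw [hcast2, hcast4] at hm
    have hsqrt : Real.sqrt ((1:ℝ)^2 + 2*(k:ℝ)^2*((k:ℝ)^4-1)) ≤ 2*(k:ℝ)^3 := by
      have hb : (1:ℝ)^2 + 2*(k:ℝ)^2*((k:ℝ)^4-1) ≤ (2*(k:ℝ)^3)^2 := by nlinarith [hkR]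
      calc Real.sqrt ((1:ℝ)^2 + 2*(k:ℝ)^2*((k:ℝ)^4-1)) ≤ Real.sqrt ((2*(k:ℝ)^3)^2) :=
        Real.sqrt_le_sqrt hb
      _ = 2*(k:ℝ)^3 := by rw [Real.sqrt_sq (by positivity)]
    have hD : 2*(ℓ x)/((k:ℝ)^2) * ((k:ℝ)^4 - 1) ≤ 2*(ℓ x)*(k:ℝ)^2 := by
      rw [div_mul_eq_mul_div, div_le_iff₀ (by positivity)]
      nlinarith [hkR, hαnn]
    have hβs : ℓ y * (Real.sqrt ((1:ℝ)^2 + 2*(k:ℝ)^2*((k:ℝ)^4-1)) + 1) ≤ ℓ y * (2*(k:ℝ)^3+1) := by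
      apply mul_le_mul_of_nonneg_left _ hβnn
      linarith [hsqrt]
    have hm2 : (k:ℝ)^4 * ℓ (x*y*x⁻¹*y⁻¹) ≤ 2*(ℓ x) + 2*(ℓ x)*(k:ℝ)^2 + (ℓ y)*(2*(k:ℝ)^3+1) :=
      le_trans hm (add_le_add (add_le_add le_rfl hD) hβs)
    have t2 : (k:ℝ)^2 ≤ (k:ℝ)^3 := by nlinarith [hkR]
    have t3 : (1:ℝ) ≤ (k:ℝ)^3 := by nlinarith [hkR]
    have m1 : 2*(ℓ x)*(k:ℝ)^2 ≤ 2*(ℓ x)*(k:ℝ)^3 := by nlinarith [hαnn, t2]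
    have m2 : 2*(ℓ x) ≤ 2*(ℓ x)*(k:ℝ)^3 := by nlinarith [hαnn, t3]
    have m3 : (ℓ y)*(2*(k:ℝ)^3+1) ≤ 3*(ℓ y)*(k:ℝ)^3 := by nlinarith [hβnn, t3]
    have final : (k:ℝ)^4 * ℓ (x*y*x⁻¹*y⁻¹) ≤ (4*(ℓ x) + 3*(ℓ y)) * (k:ℝ)^3 := by linarith
    have final2 : (k:ℝ) * ℓ (x*y*x⁻¹*y⁻¹) * (k:ℝ)^3 ≤ (4*(ℓ x)+3*(ℓ y)) * (k:ℝ)^3 := by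
      nlinarith [final]
    exact le_of_mul_le_mul_right final2 (by positivity)
  have hL0 : ℓ (x*y*x⁻¹*y⁻¹) ≤ 0 := by
    by_contra hpos
    push_neg at hpos
    obtain ⟨k, hk⟩ := exists_nat_gt ((4*(ℓ x)+3*(ℓ y))/(ℓ (x*y*x⁻¹*y⁻¹)))
    have hdivnn : 0 ≤ (4*(ℓ x)+3*(ℓ y))/(ℓ (x*y*x⁻¹*y⁻¹)) :=
      div_nonneg (by linarith) (le_of_lt hpos)
    have hk1 : 1 ≤ k := by
      rcases Nat.eq_zero_or_pos k with h | h
      · subst h; simp at hk; linarith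
      · exact h
    have := keybound k hk1
    have h2 : (4*(ℓ x)+3*(ℓ y))/(ℓ (x*y*x⁻¹*y⁻¹)) * ℓ (x*y*x⁻¹*y⁻¹)
        < (k:ℝ) * ℓ (x*y*x⁻¹*y⁻¹) := mul_lt_mul_of_pos_right hk hpos
    rw [div_mul_cancel₀ _ (ne_of_gt hpos)] at h2
    linarith
  linarith


end ForwardC




private theorem rev_dir {G : Type*} [Group G]
    (hcomm : ∀ x y : G, x * y = y * x)
    (htf : ∀ (x : G) (n : ℤ), 1 ≤ n → x ^ n = 1 → x = 1) :
    (∃ ℓ : G → ℝ,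
      (∀ x : G, 0 ≤ ℓ x) ∧
      ℓ 1 = 0 ∧
      (∀ x : G, ℓ x⁻¹ = ℓ x) ∧
      (∀ x y : G, ℓ (x * y) ≤ ℓ x + ℓ y) ∧
      (∀ (x : G) (n : ℤ), ℓ (x ^ n) = |(n : ℝ)| * ℓ x) ∧
      (∀ x : G, x ≠ 1 → 0 < ℓ x)) := by
  letI : CommGroup G := { (inferInstance : Group G) with mul_comm := hcomm }
  have hnz : ∀ (n : ℤ) (a : Additive G), n • a = 0 → n = 0 ∨ a = 0 := by
    intro n a h
    rcases lt_trichotomy n 0 with hn | hn | hn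
    · right
      have h' : (-n) • a = 0 := by rw [neg_smul, h, neg_zero]
      have h'' : (a.toMul) ^ (-n) = 1 := h'
      exact htf a.toMul (-n) (by omega) h''
    · left; exact hn
    · right
      have h'' : (a.toMul) ^ n = 1 := h
      exact htf a.toMul n (by omega) h''
  classical
  set A := Additive G
  letI V := LocalizedModule (nonZeroDivisors ℤ) A
  letI K := Localization (nonZeroDivisors ℤ)
  letI e : ℚ ≃+* K := (FractionRing.algEquiv ℤ ℚ).symm.toRingEquiv
  letI : Module ℚ V := Module.compHom V (e.toRingHom)
  let φ : A →ₗ[ℤ] V := (LocalizedModule.mkLinearMap (nonZeroDivisors ℤ) A).toAddMonoidHom.toIntLinearMap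
  have hφ : ∀ a : A, φ a = 0 → a = 0 := by
    intro a h
    have h2 : LocalizedModule.mk a (1 : nonZeroDivisors ℤ) = LocalizedModule.mk 0 (1 : nonZeroDivisors ℤ) := by
      rw [LocalizedModule.zero_mk]; exact h
    rw [LocalizedModule.mk_eq] at h2
    obtain ⟨u, hu⟩ := h2
    simp only [one_smul, smul_zero] at hu
    rcases hnz u a hu with h | h
    · exact absurd h (nonZeroDivisors.coe_ne_zero u)
    · exact h
  let b := Module.Basis.ofVectorSpace ℚ V
  -- the ℓ¹ sum of coefficients
  let S : (Module.Basis.ofVectorSpaceIndex ℚ V →₀ ℚ) → ℝ := fun f => ∑ i ∈ f.support, |((f i : ℚ) : ℝ)|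
  have Ssub : ∀ (f : Module.Basis.ofVectorSpaceIndex ℚ V →₀ ℚ) (t : Finset (Module.Basis.ofVectorSpaceIndex ℚ V)),
      f.support ⊆ t → S f = ∑ i ∈ t, |((f i : ℚ) : ℝ)| := by
    intro f t ht
    apply Finset.sum_subset ht
    intro i _ hi
    rw [Finsupp.notMem_support_iff.mp hi]
    simp
  have Snonneg : ∀ f, 0 ≤ S f := by
    intro f
    exact Finset.sum_nonneg fun i _ => abs_nonneg _
  have Szero : S 0 = 0 := by simp [S]
  have Sneg : ∀ f, S (-f) = S f := by
    intro f
    rw [Ssub (-f) f.support (by rw [Finsupp.support_neg]), Ssub f f.support subset_rfl]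
    apply Finset.sum_congr rfl
    intro i _
    rw [Finsupp.neg_apply]
    push_cast
    rw [abs_neg]
  have Sadd : ∀ f g, S (f + g) ≤ S f + S g := by
    intro f g
    rw [Ssub (f+g) (f.support ∪ g.support) (Finsupp.support_add),
      Ssub f (f.support ∪ g.support) Finset.subset_union_left,
      Ssub g (f.support ∪ g.support) Finset.subset_union_right, ← Finset.sum_add_distrib]
    apply Finset.sum_le_sum
    intro i _
    rw [Finsupp.add_apply]
    push_cast
    exact abs_add_le _ _
  have Ssmul : ∀ (n : ℤ) f, S (n • f) = |(n:ℝ)| * S f := by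
    intro n f
    rw [Ssub (n • f) f.support Finsupp.support_smul, Finset.mul_sum]
    apply Finset.sum_congr rfl
    intro i _
    rw [Finsupp.smul_apply, zsmul_eq_mul]
    push_cast
    rw [abs_mul]
  have Spos : ∀ f, f ≠ 0 → 0 < S f := by
    intro f hf
    obtain ⟨i, hi⟩ := Finsupp.support_nonempty_iff.mpr hf
    apply Finset.sum_pos' (fun j _ => abs_nonneg _) ⟨i, hi, ?_⟩
    have : f i ≠ 0 := Finsupp.mem_support_iff.mp hi
    have : ((f i : ℚ) : ℝ) ≠ 0 := by exact_mod_cast this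
    exact abs_pos.mpr this
  -- the length function
  refine ⟨fun g => S (b.repr (φ (Additive.ofMul g))), fun x => Snonneg _, ?_, ?_, ?_, ?_, ?_⟩
  · -- ℓ 1 = 0
    show S (b.repr (φ (Additive.ofMul (1:G)))) = 0
    have h' : φ (Additive.ofMul (1:G)) = 0 := by
      rw [show Additive.ofMul (1:G) = (0:A) from rfl, map_zero]
    rw [h', map_zero, Szero]
  · -- inverse
    intro x
    show S (b.repr (φ (Additive.ofMul x⁻¹))) = S (b.repr (φ (Additive.ofMul x)))
    have h' : φ (Additive.ofMul x⁻¹) = - φ (Additive.ofMul x) := by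
      rw [show Additive.ofMul x⁻¹ = -(Additive.ofMul x) from rfl, map_neg]
    rw [h', map_neg, Sneg]
  · -- subadditive
    intro x y
    show S (b.repr (φ (Additive.ofMul (x*y)))) ≤
      S (b.repr (φ (Additive.ofMul x))) + S (b.repr (φ (Additive.ofMul y)))
    have h' : φ (Additive.ofMul (x*y)) = φ (Additive.ofMul x) + φ (Additive.ofMul y) := by
      rw [show Additive.ofMul (x*y) = Additive.ofMul x + Additive.ofMul y from rfl, map_add]
    rw [h', map_add]
    exact Sadd _ _
  · -- homogeneity
    intro x n
    show S (b.repr (φ (Additive.ofMul (x ^ n)))) = |(n:ℝ)| * S (b.repr (φ (Additive.ofMul x)))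
    have h1 : φ (Additive.ofMul (x ^ n)) = n • φ (Additive.ofMul x) := by
      rw [show Additive.ofMul (x ^ n) = n • (Additive.ofMul x) from rfl, map_smul]
    rw [h1, map_zsmul, Ssmul]
  · -- positivity
    intro x hx
    show 0 < S (b.repr (φ (Additive.ofMul x)))
    apply Spos
    intro hrepr
    apply hx
    have h1 : φ (Additive.ofMul x) = 0 := (LinearEquiv.map_eq_zero_iff b.repr).mp hrepr
    have h2 : Additive.ofMul x = 0 := hφ _ h1
    exact Additive.ofMul.injective h2


end HomogeneousLengthAux

/-- A group admits a homogeneous length function if and only if it is abelian and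
torsion-free. -/
theorem exists_homogeneous_length_function_iff {G : Type*} [Group G] :
    (∃ ℓ : G → ℝ,
      (∀ x : G, 0 ≤ ℓ x) ∧
      ℓ 1 = 0 ∧
      (∀ x : G, ℓ x⁻¹ = ℓ x) ∧
      (∀ x y : G, ℓ (x * y) ≤ ℓ x + ℓ y) ∧
      (∀ (x : G) (n : ℤ), ℓ (x ^ n) = |(n : ℝ)| * ℓ x) ∧
      (∀ x : G, x ≠ 1 → 0 < ℓ x)) ↔
    ((∀ x y : G, x * y = y * x) ∧ (∀ (x : G) (n : ℤ), 1 ≤ n → x ^ n = 1 → x = 1)) := by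
  constructor
  · rintro ⟨ℓ, h0, h1, hi, hs, hh, hp⟩
    have ci := conj_inv' ℓ hi hs hh
    have ki := Kin' ℓ hi hs hh
    have pe := peH ℓ hi hs ci
    have mi := main_indH ℓ h0 hi hs hh ci ki GR' cs2'
    have cz := comm_zero ℓ h0 h1 hi hs hh pe mi
    constructor
    · intro x y
      have hone : x*y*x⁻¹*y⁻¹ = 1 := by
        by_contra hne
        exact absurd (cz x y) (ne_of_gt (hp _ hne))
      have h2 : x*y = (x*y*x⁻¹*y⁻¹) * (y*x) := by group
      rw [hone, one_mul] at h2
      exact h2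
    · intro x n hn hxn
      have hhx := hh x n
      rw [hxn, h1] at hhx
      have hnR : (1:ℝ) ≤ (n:ℝ) := by exact_mod_cast hn
      have habs : |(n:ℝ)| = (n:ℝ) := abs_of_nonneg (by linarith)
      rw [habs] at hhx
      have hx0 : ℓ x = 0 := by
        rcases mul_eq_zero.mp hhx.symm with h | h
        · linarith
        · exact h
      by_contra hne
      exact absurd hx0 (ne_of_gt (hp x hne))
  · rintro ⟨hcomm, htf⟩
    exact rev_dir hcomm htf
end

section
/- Let G be a group, c, k ∈ ℝ, and ‖·‖ : G → ℝ a function satisfying ‖xy‖ ≤ ‖x‖ + ‖y‖ + k for all x,y ∈ G and ‖x²‖ ≥ 2‖x‖ − c for all x ∈ G. Then for all x, y ∈ G one has ‖[x,y]‖ ≤ 5c + 4k. -/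
section CommutatorBoundAux

variable {G : Type*} [Group G] {c k : ℝ} {ℓ : G → ℝ}

/-- limit helper: if `a ≤ A + B(1/2)^n` for all `n`, then `a ≤ A`. -/
private lemma cbq_lim {a A B : ℝ} (h : ∀ n : ℕ, a ≤ A + B * (1/2 : ℝ) ^ n) : a ≤ A := by
  have h0 : Filter.Tendsto (fun n : ℕ => A + B * (1/2 : ℝ) ^ n) Filter.atTop (nhds (A + B * 0)) :=
    tendsto_const_nhds.add
      ((tendsto_pow_atTop_nhds_zero_of_lt_one (by norm_num) (by norm_num)).const_mul B)
  rw [mul_zero, add_zero] at h0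
  exact ge_of_tendsto' h0 h

/-- divide a `2^n`-scaled inequality. -/
private lemma cbq_div {a X B : ℝ} {n : ℕ} (h : (2:ℝ)^n * a ≤ (2:ℝ)^n * X + B) :
    a ≤ X + B * (1/2 : ℝ) ^ n := by
  have hp : (0:ℝ) < (2:ℝ)^n := by positivity
  have hh : (1/2 : ℝ)^n * (2:ℝ)^n = 1 := by
    rw [← mul_pow]; norm_num
  rw [← mul_le_mul_iff_right₀ hp]
  have e : (2:ℝ)^n * (X + B * (1/2:ℝ)^n) = (2:ℝ)^n * X + B := by
    linear_combination B * hh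
  rw [e]; exact h

private lemma cbq_pow_upper (htri : ∀ x y : G, ℓ (x * y) ≤ ℓ x + ℓ y + k)
    (n : ℕ) (a : G) : ℓ (a ^ 2 ^ n) ≤ (2:ℝ)^n * ℓ a + ((2:ℝ)^n - 1) * k := by
  induction n with
  | zero => simp
  | succ n ih =>
    have e : a ^ 2 ^ (n+1) = a ^ 2 ^ n * a ^ 2 ^ n := by
      rw [← pow_add]; congr 1; rw [pow_succ, mul_two]
    have h := htri (a ^ 2 ^ n) (a ^ 2 ^ n)
    rw [← e] at h
    have e2 : (2:ℝ)^(n+1) = (2:ℝ)^n * 2 := pow_succ 2 n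
    rw [e2]; linarith

private lemma cbq_pow_lower (hsq : ∀ x : G, 2 * ℓ x - c ≤ ℓ (x ^ 2))
    (n : ℕ) (a : G) : (2:ℝ)^n * ℓ a ≤ ℓ (a ^ 2 ^ n) + ((2:ℝ)^n - 1) * c := by
  induction n with
  | zero => simp
  | succ n ih =>
    have h := hsq (a ^ 2 ^ n)
    have e : (a ^ 2 ^ n) ^ 2 = a ^ 2 ^ (n+1) := by
      rw [← pow_mul, pow_succ]
    rw [e] at h
    have e2 : (2:ℝ)^(n+1) = (2:ℝ)^n * 2 := pow_succ 2 n
    rw [e2]; linarith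

/-- Conjugation quasi-invariance. -/
private lemma cbq_conj (htri : ∀ x y : G, ℓ (x * y) ≤ ℓ x + ℓ y + k)
    (hsq : ∀ x : G, 2 * ℓ x - c ≤ ℓ (x ^ 2))
    (g t : G) : ℓ (g * t * g⁻¹) ≤ ℓ t + c + k := by
  apply cbq_lim (B := ℓ g + ℓ g⁻¹ + k - c)
  intro n
  apply cbq_div
  have h1 := cbq_pow_lower hsq n (g * t * g⁻¹)
  rw [conj_pow] at h1
  have h2 := htri (g * t ^ 2 ^ n) g⁻¹
  have h3 := htri g (t ^ 2 ^ n)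
  have h4 := cbq_pow_upper htri n t
  have hp : (0:ℝ) ≤ (2:ℝ)^n := by positivity
  nlinarith [h1, h2, h3, h4]

/-- The key recursive estimate:
`ℓ [x,Y] ≤ (ℓ [x,Y²] + c + 2k)/2 + c`. -/
private lemma cbq_step (htri : ∀ x y : G, ℓ (x * y) ≤ ℓ x + ℓ y + k)
    (hsq : ∀ x : G, 2 * ℓ x - c ≤ ℓ (x ^ 2)) (hone : ℓ (1 : G) ≤ c) (x Y : G) :
    ℓ (x * Y * x⁻¹ * Y⁻¹) ≤ (ℓ (x * (Y*Y) * x⁻¹ * (Y*Y)⁻¹) + c + 2*k)/2 + c := by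
  set W := x * Y * x⁻¹ * Y⁻¹ with hW
  set V := x * (Y*Y) * x⁻¹ * (Y*Y)⁻¹ with hV
  -- E-bound by induction
  have hE : ∀ j : ℕ, ℓ (W^j * Y * W^j * Y⁻¹) ≤ (j:ℝ) * (ℓ V + c + 2*k) + c := by
    intro j
    induction j with
    | zero =>
      have e : W^0 * Y * W^0 * Y⁻¹ = (1:G) := by simp
      rw [e]; simpa using hone
    | succ j ih =>
      have key : W^(j+1) * Y * W^(j+1) * Y⁻¹
          = (W^j * V * (W^j)⁻¹) * (W^j * Y * W^j * Y⁻¹) := by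
        have h1 : W^(j+1) = W^j * W := pow_succ W j
        have h2 : W^(j+1) = W * W^j := pow_succ' W j
        nth_rewrite 2 [h2]
        rw [h1]
        generalize W^j = Z
        rw [hW, hV]
        group
      have t1 := htri (W^j * V * (W^j)⁻¹) (W^j * Y * W^j * Y⁻¹)
      rw [← key] at t1
      have t2 := cbq_conj htri hsq (W^j) V
      push_cast
      nlinarith [t1, t2, ih]
  -- bound for W^(j+j)
  have hW2 : ∀ j : ℕ, ℓ (W^(j+j)) ≤ (j:ℝ) * (ℓ V + c + 2*k) + (ℓ Y + ℓ Y⁻¹ + 2*c + 3*k) := by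
    intro j
    have e : W^(j+j) = (W^j * Y * W^j * Y⁻¹) * (Y * ((W^j)⁻¹ * Y⁻¹ * ((W^j)⁻¹)⁻¹)) := by
      rw [pow_add]
      generalize W^j = Z
      group
    have t1 := htri (W^j * Y * W^j * Y⁻¹) (Y * ((W^j)⁻¹ * Y⁻¹ * ((W^j)⁻¹)⁻¹))
    rw [← e] at t1
    have t2 := htri Y ((W^j)⁻¹ * Y⁻¹ * ((W^j)⁻¹)⁻¹)
    have t3 := cbq_conj htri hsq (W^j)⁻¹ Y⁻¹
    have t4 := hE j
    nlinarith [t1, t2, t3, t4]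
  -- pump with powers of two
  apply cbq_lim (B := (ℓ Y + ℓ Y⁻¹ + c + 3*k)/2)
  intro t
  have hlow := cbq_pow_lower hsq (t+1) W
  have e : W ^ 2 ^ (t+1) = W ^ (2^t + 2^t) := by
    congr 1; rw [pow_succ, mul_two]
  rw [e] at hlow
  have hup := hW2 (2^t)
  have hc : ((2^t : ℕ) : ℝ) = (2:ℝ)^t := by push_cast; ring
  rw [hc] at hup
  have goal2 : (2:ℝ)^(t+1) * ℓ W ≤ (2:ℝ)^(t+1) * ((ℓ V + c + 2*k)/2 + c)
      + (ℓ Y + ℓ Y⁻¹ + c + 3*k) := by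
    have e2 : (2:ℝ)^(t+1) = (2:ℝ)^t * 2 := pow_succ 2 t
    rw [e2] at hlow ⊢
    nlinarith [hlow, hup]
  have := cbq_div goal2
  calc ℓ W ≤ ((ℓ V + c + 2*k)/2 + c) + (ℓ Y + ℓ Y⁻¹ + c + 3*k) * (1/2:ℝ)^(t+1) := this
    _ = ((ℓ V + c + 2*k)/2 + c) + (ℓ Y + ℓ Y⁻¹ + c + 3*k)/2 * (1/2:ℝ)^t := by
        rw [pow_succ]; ring

end CommutatorBoundAux

/-- Quasified version: if `ℓ (x y) ≤ ℓ x + ℓ y + k` and `ℓ (x^2) ≥ 2 ℓ x - c`, then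
`ℓ [x,y] ≤ 5c + 4k`. -/
theorem commutator_bound_quasi {G : Type*} [Group G] (c k : ℝ) (ℓ : G → ℝ)
    (htri : ∀ x y : G, ℓ (x * y) ≤ ℓ x + ℓ y + k)
    (hsq : ∀ x : G, 2 * ℓ x - c ≤ ℓ (x ^ 2)) :
    ∀ x y : G, ℓ (x * y * x⁻¹ * y⁻¹) ≤ 5 * c + 4 * k := by
  intro x y
  have hone : ℓ (1 : G) ≤ c := by
    have := hsq (1 : G); rw [one_pow] at this; linarith
  have hck : 0 ≤ c + k := by
    have := htri (1 : G) (1 : G); rw [mul_one] at this; linarith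
  set u : ℕ → ℝ := fun s => ℓ (x * y^(2^s) * x⁻¹ * (y^(2^s))⁻¹) with hu
  have hrec : ∀ s : ℕ, u s ≤ (u (s+1) + c + 2*k)/2 + c := by
    intro s
    have h := cbq_step htri hsq hone x (y^(2^s))
    have epow : y^(2^s) * y^(2^s) = y^(2^(s+1)) := by
      rw [← pow_add]; congr 1; rw [pow_succ, mul_two]
    rw [epow] at h
    exact h
  have hunif : ∀ s : ℕ, u s ≤ ℓ x + ℓ x⁻¹ + c + 2*k := by
    intro s
    have e : x * y^(2^s) * x⁻¹ * (y^(2^s))⁻¹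
        = x * (y^(2^s) * x⁻¹ * (y^(2^s))⁻¹) := by group
    have t1 : u s = ℓ (x * (y^(2^s) * x⁻¹ * (y^(2^s))⁻¹)) := by rw [hu]; simp only; rw [e]
    have t2 := htri x (y^(2^s) * x⁻¹ * (y^(2^s))⁻¹)
    have t3 := cbq_conj htri hsq (y^(2^s)) x⁻¹
    rw [t1]; linarith
  have hroll : ∀ S : ℕ, u 0 ≤ (3*c+2*k) * (1 - (1/2:ℝ)^S) + (1/2:ℝ)^S * u S := by
    intro S
    induction S with
    | zero => simp
    | succ S ih =>
      have hp : (0:ℝ) ≤ (1/2:ℝ)^S := by positivity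
      have hm := mul_le_mul_of_nonneg_left (hrec S) hp
      rw [pow_succ]
      nlinarith [ih, hm]
  have hfin : u 0 ≤ 3*c + 2*k := by
    apply cbq_lim (B := ℓ x + ℓ x⁻¹ + c + 2*k - (3*c+2*k))
    intro S
    have hp : (0:ℝ) ≤ (1/2:ℝ)^S := by positivity
    have hm := mul_le_mul_of_nonneg_left (hunif S) hp
    nlinarith [hroll S, hm]
  have e0 : u 0 = ℓ (x * y * x⁻¹ * y⁻¹) := by
    rw [hu]; simp
  rw [e0] at hfin
  linarith
end

section
/- Let G be a group, c ∈ ℝ, and ‖·‖ : G → ℝ a function satisfying hypotheses (i) and (ii) with constant c. Then for all x, y ∈ G one has ‖yxy⁻¹‖ ≤ ‖x‖ + c (approximate conjugation invariance). -/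
/-- Approximate conjugation invariance: under the triangle inequality and
`ℓ (x^2) ≥ 2 ℓ x - c`, one has `ℓ (y x y⁻¹) ≤ ℓ x + c`. -/
theorem approximate_conjugation_invariance {G : Type*} [Group G] (c : ℝ) (ℓ : G → ℝ)
    (htri : ∀ x y : G, ℓ (x * y) ≤ ℓ x + ℓ y)
    (hsq : ∀ x : G, 2 * ℓ x - c ≤ ℓ (x ^ 2)) :
    ∀ x y : G, ℓ (y * x * y⁻¹) ≤ ℓ x + c := by
  -- upper bound: ℓ (x^(n+1)) ≤ (n+1) ℓ x
  have hup : ∀ (n : ℕ) (x : G), ℓ (x ^ (n + 1)) ≤ (n + 1 : ℝ) * ℓ x := by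
    intro n
    induction n with
    | zero => intro x; simp
    | succ n ih =>
      intro x
      rw [pow_succ]
      have := htri (x ^ (n + 1)) x
      have := ih x
      push_cast
      linarith
  -- lower bound: ℓ (x^(2^k)) ≥ 2^k ℓ x - (2^k - 1) c
  have hlow : ∀ (k : ℕ) (x : G),
      (2 : ℝ) ^ k * ℓ x - ((2 : ℝ) ^ k - 1) * c ≤ ℓ (x ^ (2 ^ k : ℕ)) := by
    intro k
    induction k with
    | zero => intro x; simp
    | succ k ih =>
      intro x
      have hx : x ^ (2 ^ (k + 1) : ℕ) = (x ^ (2 ^ k : ℕ)) ^ 2 := by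
        rw [← pow_mul]; ring_nf
      rw [hx]
      have h1 := hsq (x ^ (2 ^ k : ℕ))
      have h2 := ih x
      have : (2 : ℝ) ^ (k + 1) = 2 * 2 ^ k := by ring
      rw [this]
      nlinarith
  intro x y
  by_contra h
  push_neg at h
  set a : ℝ := ℓ (y * x * y⁻¹) - ℓ x - c with ha
  have hapos : 0 < a := by simp [ha]; linarith
  set B : ℝ := ℓ y + ℓ y⁻¹ - c with hB
  -- key inequality for each k
  have key : ∀ k : ℕ, (2 : ℝ) ^ k * a ≤ B := by
    intro k
    have hconj : (y * x * y⁻¹) ^ (2 ^ k : ℕ) = y * x ^ (2 ^ k : ℕ) * y⁻¹ := by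
      rw [conj_pow]
    have h1 := hlow k (y * x * y⁻¹)
    rw [hconj] at h1
    have h2 : ℓ (y * x ^ (2 ^ k : ℕ) * y⁻¹) ≤ ℓ y + ℓ (x ^ (2 ^ k : ℕ)) + ℓ y⁻¹ := by
      calc ℓ (y * x ^ (2 ^ k : ℕ) * y⁻¹) ≤ ℓ (y * x ^ (2 ^ k : ℕ)) + ℓ y⁻¹ := htri _ _
        _ ≤ ℓ y + ℓ (x ^ (2 ^ k : ℕ)) + ℓ y⁻¹ := by linarith [htri y (x ^ (2 ^ k : ℕ))]
    have h3 : ℓ (x ^ (2 ^ k : ℕ)) ≤ (2 : ℝ) ^ k * ℓ x := by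
      obtain ⟨m, hm⟩ : ∃ m : ℕ, 2 ^ k = m + 1 :=
        ⟨2 ^ k - 1, (Nat.succ_pred_eq_of_pos (Nat.two_pow_pos k)).symm⟩
      have h2k : ((2:ℝ)^k) = (m:ℝ)+1 := by
        rw [show ((2:ℝ)^k) = ((2^k:ℕ):ℝ) by push_cast; ring, hm]; push_cast; ring
      rw [hm, h2k]
      exact hup m x
    simp only [ha, hB]
    nlinarith
  -- get contradiction: 2^k unbounded
  obtain ⟨k, hk⟩ := pow_unbounded_of_one_lt (B / a) (by norm_num : (1:ℝ) < 2)
  have := key k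
  rw [div_lt_iff₀ hapos] at hk
  linarith
end

section
/- Let ‖·‖ be a homogeneous pseudo-length function on a group G. Then ‖·‖ is conjugation invariant: ‖yxy⁻¹‖ = ‖x‖ for all x, y ∈ G. -/
/-- Any homogeneous pseudo-length function is conjugation invariant. -/
theorem homogeneous_pseudo_length_conj_invariant {G : Type*} [Group G] (ℓ : G → ℝ)
    (hnonneg : ∀ x : G, 0 ≤ ℓ x)
    (hone : ℓ 1 = 0)
    (hinv : ∀ x : G, ℓ x⁻¹ = ℓ x)
    (htri : ∀ x y : G, ℓ (x * y) ≤ ℓ x + ℓ y)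
    (hhom : ∀ (x : G) (n : ℤ), ℓ (x ^ n) = |(n : ℝ)| * ℓ x) :
    ∀ x y : G, ℓ (y * x * y⁻¹) = ℓ x := by
  have key : ∀ x y : G, ℓ (y * x * y⁻¹) ≤ ℓ x := by
    intro x y
    by_contra h
    push_neg at h
    obtain ⟨n, hn⟩ := exists_nat_gt ((2 * ℓ y) / (ℓ (y * x * y⁻¹) - ℓ x))
    have hd : 0 < ℓ (y * x * y⁻¹) - ℓ x := by linarith
    have hn' : 2 * ℓ y < n * (ℓ (y * x * y⁻¹) - ℓ x) := by
      rw [div_lt_iff₀ hd] at hn; linarith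
    have hbound : (n : ℝ) * ℓ (y * x * y⁻¹) ≤ (n : ℝ) * ℓ x + 2 * ℓ y := by
      have e1 : ℓ ((y * x * y⁻¹) ^ (n : ℤ)) = (n : ℝ) * ℓ (y * x * y⁻¹) := by
        rw [hhom]; simp
      have e2 : ℓ (x ^ (n : ℤ)) = (n : ℝ) * ℓ x := by
        rw [hhom]; simp
      have e3 : (y * x * y⁻¹) ^ (n : ℤ) = y * x ^ (n : ℤ) * y⁻¹ := by
        exact conj_zpow
      calc (n : ℝ) * ℓ (y * x * y⁻¹) = ℓ ((y * x * y⁻¹) ^ (n : ℤ)) := e1.symm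
        _ = ℓ (y * x ^ (n : ℤ) * y⁻¹) := by rw [e3]
        _ ≤ ℓ (y * x ^ (n : ℤ)) + ℓ y⁻¹ := htri _ _
        _ ≤ ℓ y + ℓ (x ^ (n : ℤ)) + ℓ y⁻¹ := by linarith [htri y (x ^ (n : ℤ))]
        _ = (n : ℝ) * ℓ x + 2 * ℓ y := by rw [e2, hinv]; ring
    nlinarith
  intro x y
  refine le_antisymm (key x y) ?_
  have := key (y * x * y⁻¹) y⁻¹
  have e : y⁻¹ * (y * x * y⁻¹) * y⁻¹⁻¹ = x := by group
  rwa [e] at this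
end

section
/- Let G be a group, c ∈ ℝ, and ‖·‖ : G → ℝ a function satisfying hypotheses (i) and (ii) with constant c. Let x, y, z, w ∈ G be such that x is conjugate to wy and x is conjugate to zw⁻¹ (i.e., there exist s, t ∈ G with x = s(wy)s⁻¹ and x = t(zw⁻¹)t⁻¹). Then ‖x‖ ≤ (‖y‖ + ‖z‖)/2 + (3/2)·c. -/
open Filter Topology

/-- From `L ≤ B + M / 2^k` for all `k`, deduce `L ≤ B`. -/
private lemma le_of_forall_le_add_div_two_pow (L B M : ℝ)
    (h : ∀ k : ℕ, L ≤ B + M / 2 ^ k) : L ≤ B := by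
  have h1 : Tendsto (fun k : ℕ => ((1 : ℝ) / 2) ^ k) atTop (nhds 0) :=
    tendsto_pow_atTop_nhds_zero_of_lt_one (by norm_num) (by norm_num)
  have h2 : Tendsto (fun k : ℕ => B + M * ((1 : ℝ) / 2) ^ k) atTop (nhds (B + M * 0)) :=
    (h1.const_mul M).const_add B
  rw [mul_zero, add_zero] at h2
  refine ge_of_tendsto' h2 fun k => ?_
  have h3 : M * ((1 : ℝ) / 2) ^ k = M / 2 ^ k := by
    rw [div_pow, one_pow]
    ring
  rw [h3]
  exact h k

private lemma conj_pow_aux {G : Type*} [Group G] (g a : G) (n : ℕ) :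
    (g * a * g⁻¹) ^ n = g * a ^ n * g⁻¹ := by
  induction n with
  | zero => simp
  | succ n ih =>
    rw [pow_succ, pow_succ, ih]
    group

private lemma ell_pow_le {G : Type*} [Group G] (ℓ : G → ℝ)
    (htri : ∀ x y : G, ℓ (x * y) ≤ ℓ x + ℓ y) (a : G) :
    ∀ n : ℕ, 1 ≤ n → ℓ (a ^ n) ≤ (n : ℝ) * ℓ a := by
  intro n
  induction n with
  | zero => intro h; exact absurd h (by norm_num)
  | succ m ih =>
    intro _
    rcases Nat.eq_zero_or_pos m with h0 | h0
    · subst h0; simp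
    · have h1 : a ^ (m + 1) = a ^ m * a := pow_succ a m
      have h2 := htri (a ^ m) a
      have h3 := ih h0
      rw [h1]
      push_cast
      linarith

private lemma ell_two_pow_low {G : Type*} [Group G] (c : ℝ) (ℓ : G → ℝ)
    (hsq : ∀ x : G, 2 * ℓ x - c ≤ ℓ (x ^ 2)) (a : G) :
    ∀ k : ℕ, (2 : ℝ) ^ k * ℓ a - ((2 : ℝ) ^ k - 1) * c ≤ ℓ (a ^ (2 ^ k : ℕ)) := by
  intro k
  induction k with
  | zero => simp
  | succ k ih =>
    have h1 : a ^ (2 ^ (k + 1) : ℕ) = (a ^ (2 ^ k : ℕ)) ^ 2 := by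
      rw [pow_succ, pow_mul]
    rw [h1]
    have h2 := hsq (a ^ (2 ^ k : ℕ))
    rw [pow_succ]
    nlinarith [ih, h2]

/-- Conjugation quasi-invariance: `ℓ (g * a * g⁻¹) ≤ ℓ a + c`. -/
private lemma ell_conj {G : Type*} [Group G] (c : ℝ) (ℓ : G → ℝ)
    (htri : ∀ x y : G, ℓ (x * y) ≤ ℓ x + ℓ y)
    (hsq : ∀ x : G, 2 * ℓ x - c ≤ ℓ (x ^ 2)) (g a : G) :
    ℓ (g * a * g⁻¹) ≤ ℓ a + c := by
  apply le_of_forall_le_add_div_two_pow _ _ (ℓ g + ℓ g⁻¹ - c)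
  intro k
  have h0 : (0 : ℝ) < 2 ^ k := by positivity
  have h1 := ell_two_pow_low c ℓ hsq (g * a * g⁻¹) k
  rw [conj_pow_aux] at h1
  have h2 : ℓ (g * a ^ (2 ^ k : ℕ) * g⁻¹) ≤ ℓ g + ℓ (a ^ (2 ^ k : ℕ)) + ℓ g⁻¹ := by
    have t1 := htri (g * a ^ (2 ^ k : ℕ)) g⁻¹
    have t2 := htri g (a ^ (2 ^ k : ℕ))
    linarith
  have h3 : ℓ (a ^ (2 ^ k : ℕ)) ≤ (2 : ℝ) ^ k * ℓ a := by
    have := ell_pow_le ℓ htri a (2 ^ k) Nat.one_le_two_pow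
    push_cast at this
    exact this
  have key : ℓ (g * a * g⁻¹) - (ℓ a + c) ≤ (ℓ g + ℓ g⁻¹ - c) / 2 ^ k := by
    rw [le_div_iff₀ h0]
    nlinarith [h1, h2, h3]
  linarith

/-- Splitting lemma: if `x` is conjugate to both `w * y` and `z * w⁻¹`, then
`ℓ x ≤ (ℓ y + ℓ z) / 2 + (3/2) c`. -/
theorem splitting_lemma {G : Type*} [Group G] (c : ℝ) (ℓ : G → ℝ)
    (htri : ∀ x y : G, ℓ (x * y) ≤ ℓ x + ℓ y)
    (hsq : ∀ x : G, 2 * ℓ x - c ≤ ℓ (x ^ 2))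
    (x y z w : G) (s t : G)
    (hs : x = s * (w * y) * s⁻¹) (ht : x = t * (z * w⁻¹) * t⁻¹) :
    ℓ x ≤ (ℓ y + ℓ z) / 2 + (3 / 2) * c := by
  -- c is nonnegative
  have hc : 0 ≤ c := by
    have h1 := htri 1 1
    have h2 := hsq 1
    simp at h1 h2
    linarith
  -- conjugation forms of x
  have hxu : x = (s * w) * (y * w) * (s * w)⁻¹ := by rw [hs]; group
  have hxv : x = (t * w) * (w⁻¹ * z) * (t * w)⁻¹ := by rw [ht]; group
  have hxuN : ∀ n : ℕ, x ^ n = (s * w) * (y * w) ^ n * (s * w)⁻¹ := by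
    intro n; rw [hxu, conj_pow_aux]
  have hxvN : ∀ n : ℕ, x ^ n = (t * w) * (w⁻¹ * z) ^ n * (t * w)⁻¹ := by
    intro n; rw [hxv, conj_pow_aux]
  -- telescoping bound: ℓ ((yw)^n (w⁻¹z)^n) ≤ n (ℓ (yz) + c)
  have hA : ∀ n : ℕ, 1 ≤ n →
      ℓ ((y * w) ^ n * (w⁻¹ * z) ^ n) ≤ (n : ℝ) * (ℓ (y * z) + c) := by
    intro n
    induction n with
    | zero => intro h; exact absurd h (by norm_num)
    | succ m ih =>
      intro _
      rcases Nat.eq_zero_or_pos m with h0 | h0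
      · subst h0
        have e1 : (y * w) ^ 1 * (w⁻¹ * z) ^ 1 = y * z := by group
        rw [e1]
        push_cast
        linarith
      · have huv : (y * w) * (w⁻¹ * z) = y * z := by
          simp [mul_assoc]
        have key : (y * w) ^ (m + 1) * (w⁻¹ * z) ^ (m + 1) =
            ((y * w) ^ m * (y * z) * ((y * w) ^ m)⁻¹) *
              ((y * w) ^ m * (w⁻¹ * z) ^ m) := by
          calc (y * w) ^ (m + 1) * (w⁻¹ * z) ^ (m + 1)
              = ((y * w) ^ m * (y * w)) * ((w⁻¹ * z) * (w⁻¹ * z) ^ m) := by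
                rw [pow_succ, pow_succ']
            _ = (y * w) ^ m * (((y * w) * (w⁻¹ * z)) * (w⁻¹ * z) ^ m) := by
                simp [mul_assoc]
            _ = (y * w) ^ m * ((y * z) * (w⁻¹ * z) ^ m) := by rw [huv]
            _ = ((y * w) ^ m * (y * z) * ((y * w) ^ m)⁻¹) *
                  ((y * w) ^ m * (w⁻¹ * z) ^ m) := by simp [mul_assoc]
        rw [key]
        have t1 := htri ((y * w) ^ m * (y * z) * ((y * w) ^ m)⁻¹)
          ((y * w) ^ m * (w⁻¹ * z) ^ m)
        have t2 := ell_conj c ℓ htri hsq ((y * w) ^ m) (y * z)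
        have t3 := ih h0
        push_cast
        push_cast at t3
        linarith
  -- main inequality for each k
  have hmain : ∀ k : ℕ, 2 * ℓ x ≤ (ℓ (y * z) + 3 * c) +
      (ℓ (s * w) + ℓ ((s * w)⁻¹ * (t * w)) + ℓ ((t * w)⁻¹)) / 2 ^ k := by
    intro k
    have h0 : (0 : ℝ) < 2 ^ k := by positivity
    have low := ell_two_pow_low c ℓ hsq x (k + 1)
    have id1 : x ^ (2 ^ (k + 1) : ℕ) =
        (s * w) * (((y * w) ^ (2 ^ k : ℕ) * (w⁻¹ * z) ^ (2 ^ k : ℕ)) *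
          ((((w⁻¹ * z) ^ (2 ^ k : ℕ))⁻¹ * ((s * w)⁻¹ * (t * w)) *
            (((w⁻¹ * z) ^ (2 ^ k : ℕ))⁻¹)⁻¹))) * (t * w)⁻¹ := by
      have e1 : x ^ (2 ^ (k + 1) : ℕ) = x ^ (2 ^ k : ℕ) * x ^ (2 ^ k : ℕ) := by
        rw [pow_succ, pow_mul, sq]
      rw [e1]
      nth_rewrite 1 [hxuN (2 ^ k)]
      nth_rewrite 1 [hxvN (2 ^ k)]
      group
    rw [id1] at low
    -- triangle inequalities
    have t1 := htri ((s * w) * (((y * w) ^ (2 ^ k : ℕ) * (w⁻¹ * z) ^ (2 ^ k : ℕ)) *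
          ((((w⁻¹ * z) ^ (2 ^ k : ℕ))⁻¹ * ((s * w)⁻¹ * (t * w)) *
            (((w⁻¹ * z) ^ (2 ^ k : ℕ))⁻¹)⁻¹)))) ((t * w)⁻¹)
    have t2 := htri (s * w) (((y * w) ^ (2 ^ k : ℕ) * (w⁻¹ * z) ^ (2 ^ k : ℕ)) *
          ((((w⁻¹ * z) ^ (2 ^ k : ℕ))⁻¹ * ((s * w)⁻¹ * (t * w)) *
            (((w⁻¹ * z) ^ (2 ^ k : ℕ))⁻¹)⁻¹)))
    have t3 := htri ((y * w) ^ (2 ^ k : ℕ) * (w⁻¹ * z) ^ (2 ^ k : ℕ))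
          ((((w⁻¹ * z) ^ (2 ^ k : ℕ))⁻¹ * ((s * w)⁻¹ * (t * w)) *
            (((w⁻¹ * z) ^ (2 ^ k : ℕ))⁻¹)⁻¹))
    have t4 := ell_conj c ℓ htri hsq (((w⁻¹ * z) ^ (2 ^ k : ℕ))⁻¹)
      ((s * w)⁻¹ * (t * w))
    have t5 := hA (2 ^ k) Nat.one_le_two_pow
    push_cast at t5
    rw [pow_succ] at low
    have key : 2 * ℓ x - (ℓ (y * z) + 3 * c) ≤
        (ℓ (s * w) + ℓ ((s * w)⁻¹ * (t * w)) + ℓ ((t * w)⁻¹)) / 2 ^ k := by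
      rw [le_div_iff₀ h0]
      nlinarith [low, t1, t2, t3, t4, t5]
    linarith
  have final : 2 * ℓ x ≤ ℓ (y * z) + 3 * c :=
    le_of_forall_le_add_div_two_pow _ _ _ hmain
  have hyz := htri y z
  linarith
end

section
/- Let G be a group, c ∈ ℝ, and ‖·‖ : G → ℝ a function satisfying hypotheses (i) and (ii) with constant c. Fix x, y ∈ G and define f : ℤ × ℤ → ℝ by f(m,k) := ‖x^m · [x,y]^k‖. Then for all m, k ∈ ℤ one has f(m,k) ≤ (f(m−1,k) + f(m+1,k−1))/2 + 2c. -/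
/-- The recursive inequality for `f(m,k) := ℓ (x^m [x,y]^k)`:
`f(m,k) ≤ (f(m-1,k) + f(m+1,k-1)) / 2 + 2c`. -/
theorem f_recursive_inequality {G : Type*} [Group G] (c : ℝ) (ℓ : G → ℝ)
    (htri : ∀ x y : G, ℓ (x * y) ≤ ℓ x + ℓ y)
    (hsq : ∀ x : G, 2 * ℓ x - c ≤ ℓ (x ^ 2))
    (x y : G)
    (f : ℤ × ℤ → ℝ)
    (hf : ∀ m k : ℤ, f (m, k) = ℓ (x ^ m * (x * y * x⁻¹ * y⁻¹) ^ k)) :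
    ∀ m k : ℤ, f (m, k) ≤ (f (m - 1, k) + f (m + 1, k - 1)) / 2 + 2 * c := by
  -- ℓ 1 ≥ 0 and ℓ 1 ≤ c, hence 0 ≤ c
  have hone₀ : 0 ≤ ℓ (1 : G) := by
    have h1 : ℓ ((1 : G) * 1) ≤ ℓ 1 + ℓ 1 := htri 1 1
    simp only [one_mul] at h1
    linarith
  have hone : ℓ (1 : G) ≤ c := by
    have h2 : 2 * ℓ (1 : G) - c ≤ ℓ ((1 : G) ^ 2) := hsq 1
    simp only [one_pow] at h2
    linarith
  have hc : 0 ≤ c := le_trans hone₀ hone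
  -- subadditivity for powers
  have hpow : ∀ (u : G) (n : ℕ), ℓ (u ^ (n + 1)) ≤ (n + 1 : ℝ) * ℓ u := by
    intro u n
    induction n with
    | zero => simp
    | succ n ih =>
      have e : u ^ (n + 2) = u ^ (n + 1) * u := by rw [pow_succ]
      have h := htri (u ^ (n + 1)) u
      rw [← e] at h
      have h2 : ℓ (u ^ (n + 2)) ≤ (n + 1 : ℝ) * ℓ u + ℓ u := le_trans h (by linarith)
      push_cast
      push_cast at h2
      linarith
  -- iterated squaring lower bound
  have hsqpow : ∀ (u : G) (n : ℕ),
      (2 : ℝ) ^ n * ℓ u - ((2 : ℝ) ^ n - 1) * c ≤ ℓ (u ^ (2 ^ n : ℕ)) := by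
    intro u n
    induction n with
    | zero => simp
    | succ n ih =>
      have e : u ^ (2 ^ (n + 1) : ℕ) = (u ^ (2 ^ n : ℕ)) ^ 2 := by
        rw [← pow_mul, pow_succ]
      have h2 := hsq (u ^ (2 ^ n : ℕ))
      rw [← e] at h2
      have e2 : (2 : ℝ) ^ (n + 1) = 2 * (2 : ℝ) ^ n := by ring
      rw [e2]
      linarith
  -- conjugation of powers
  have hcp : ∀ (g v : G) (n : ℕ), (g * v * g⁻¹) ^ n = g * v ^ n * g⁻¹ := by
    intro g v n
    induction n with
    | zero => simp
    | succ n ih => rw [pow_succ, pow_succ, ih]; group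
  -- approximate conjugation invariance: ℓ(g u g⁻¹) ≤ ℓ u + c
  have hconj : ∀ g u : G, ℓ (g * u * g⁻¹) ≤ ℓ u + c := by
    intro g u
    by_contra hcon
    push_neg at hcon
    have hδ : 0 < ℓ (g * u * g⁻¹) - ℓ u - c := by linarith
    obtain ⟨n, hn⟩ := exists_nat_gt ((ℓ g + ℓ g⁻¹ - c) / (ℓ (g * u * g⁻¹) - ℓ u - c))
    have hn2 : (n : ℝ) ≤ (2 : ℝ) ^ n := by
      have := Nat.lt_two_pow_self (n := n)
      exact_mod_cast this.le
    have h1 := hsqpow (g * u * g⁻¹) n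
    rw [hcp g u (2 ^ n)] at h1
    have h2 : ℓ (g * u ^ (2 ^ n : ℕ) * g⁻¹) ≤ ℓ g + ℓ (u ^ (2 ^ n : ℕ)) + ℓ g⁻¹ := by
      have t1 := htri (g * u ^ (2 ^ n : ℕ)) g⁻¹
      have t2 := htri g (u ^ (2 ^ n : ℕ))
      linarith
    have h3 : ℓ (u ^ (2 ^ n : ℕ)) ≤ (2 : ℝ) ^ n * ℓ u := by
      obtain ⟨p, hp⟩ : ∃ p : ℕ, (2 ^ n : ℕ) = p + 1 :=
        ⟨2 ^ n - 1, by have := Nat.one_le_two_pow (n := n); omega⟩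
      have hb := hpow u p
      rw [← hp] at hb
      have hcast : ((2 ^ n : ℕ) : ℝ) = (2 : ℝ) ^ n := by push_cast; ring
      calc ℓ (u ^ (2 ^ n : ℕ)) ≤ ((p : ℝ) + 1) * ℓ u := hb
        _ = ((2 ^ n : ℕ) : ℝ) * ℓ u := by rw [hp]; push_cast; ring
        _ = (2 : ℝ) ^ n * ℓ u := by rw [hcast]
    have hkey : (2 : ℝ) ^ n * (ℓ (g * u * g⁻¹) - ℓ u - c) ≤ ℓ g + ℓ g⁻¹ - c := by
      nlinarith [pow_pos (by norm_num : (0:ℝ) < 2) n]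
    have hgt : ℓ g + ℓ g⁻¹ - c < (2 : ℝ) ^ n * (ℓ (g * u * g⁻¹) - ℓ u - c) := by
      have h4 := (div_lt_iff₀ hδ).mp (lt_of_lt_of_le hn hn2)
      linarith [mul_le_mul_of_nonneg_right hn2 hδ.le]
    linarith
  -- main argument
  intro m k
  rw [hf m k, hf (m - 1) k, hf (m + 1) (k - 1)]
  set z : G := x * y * x⁻¹ * y⁻¹ with hz
  set a : G := x ^ m * z ^ k with ha
  set b1 : G := x ^ (m - 1) * z ^ k with hb1
  set b2 : G := x ^ (m + 1) * z ^ (k - 1) with hb2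
  set q : G := z ^ (1 - k) * y with hq
  set u : G := q * x⁻¹ * q⁻¹ with hu
  -- key factorizations of a
  have hxb1 : x * b1 = a := by rw [hb1, ha]; group
  have hyx : y * x⁻¹ * y⁻¹ = x⁻¹ * z := by rw [hz]; group
  have hb2u : b2 * u = a := by
    rw [hu, hq, hb2, ha]
    have h1 : z ^ (1 - k) * y * x⁻¹ * (z ^ (1 - k) * y)⁻¹
        = z ^ (1 - k) * (y * x⁻¹ * y⁻¹) * z ^ (k - 1) := by group
    rw [h1, hyx]
    group
  -- staircase 1 : a^N = x^N * B with ℓ B ≤ N(ℓ b1 + c) + c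
  have L1 : ∀ N : ℕ, ∃ B : G, a ^ N = x ^ N * B ∧ ℓ B ≤ (N : ℝ) * (ℓ b1 + c) + c := by
    intro N
    induction N with
    | zero => exact ⟨1, by simp, by simpa using hone⟩
    | succ n ih =>
      obtain ⟨B, hB, hBl⟩ := ih
      refine ⟨(x ^ n)⁻¹ * b1 * ((x ^ n)⁻¹)⁻¹ * B, ?_, ?_⟩
      · rw [pow_succ', hB, ← hxb1]
        group
      · have t1 := htri ((x ^ n)⁻¹ * b1 * ((x ^ n)⁻¹)⁻¹) B
        have t2 := hconj (x ^ n)⁻¹ b1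
        push_cast
        push_cast at hBl
        linarith
  -- staircase 2 : a^N = C * u^N with ℓ C ≤ N(ℓ b2 + c) + c
  have L2 : ∀ N : ℕ, ∃ C : G, a ^ N = C * u ^ N ∧ ℓ C ≤ (N : ℝ) * (ℓ b2 + c) + c := by
    intro N
    induction N with
    | zero => exact ⟨1, by simp, by simpa using hone⟩
    | succ n ih =>
      obtain ⟨C, hC, hCl⟩ := ih
      refine ⟨C * (u ^ n * b2 * (u ^ n)⁻¹), ?_, ?_⟩
      · rw [pow_succ, hC, ← hb2u]
        group
      · have t1 := htri C (u ^ n * b2 * (u ^ n)⁻¹)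
        have t2 := hconj (u ^ n) b2
        push_cast
        push_cast at hCl
        linarith
  -- combined bound for each n
  have key : ∀ n : ℕ, (2 : ℝ) ^ n *
      (2 * ℓ a - (ℓ b1 + ℓ b2) - 4 * c) ≤ ℓ q + ℓ q⁻¹ + 3 * c := by
    intro n
    obtain ⟨B, hB, hBl⟩ := L1 (2 ^ n)
    obtain ⟨C, hC, hCl⟩ := L2 (2 ^ n)
    -- a^(2^(n+1)) = x^N * B * (C * u^N)
    have epow : a ^ (2 ^ (n + 1) : ℕ) = a ^ (2 ^ n : ℕ) * a ^ (2 ^ n : ℕ) := by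
      rw [← pow_add]
      congr 1
      have : (2 : ℕ) ^ (n + 1) = 2 ^ n * 2 := by rw [pow_succ]
      omega
    have e0 : a ^ (2 ^ (n + 1) : ℕ)
        = x ^ (2 ^ n : ℕ) * B * (C * u ^ (2 ^ n : ℕ)) := by
      rw [epow]
      nth_rewrite 1 [hB]
      rw [hC]
    -- conjugate to bring u^N next to x^N
    have e1 : (u ^ (2 ^ n : ℕ))⁻¹ * (u ^ (2 ^ n : ℕ) * x ^ (2 ^ n : ℕ) * B * C) *
        ((u ^ (2 ^ n : ℕ))⁻¹)⁻¹ = x ^ (2 ^ n : ℕ) * B * (C * u ^ (2 ^ n : ℕ)) := by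
      group
    have h1 : ℓ (a ^ (2 ^ (n + 1) : ℕ))
        ≤ ℓ (u ^ (2 ^ n : ℕ) * x ^ (2 ^ n : ℕ) * B * C) + c := by
      rw [e0, ← e1]
      exact hconj _ _
    -- bound the u^N x^N part
    have e2 : u ^ (2 ^ n : ℕ) * x ^ (2 ^ n : ℕ)
        = q * ((x ^ (2 ^ n : ℕ))⁻¹ * q⁻¹ * ((x ^ (2 ^ n : ℕ))⁻¹)⁻¹) := by
      have : u ^ (2 ^ n : ℕ) = q * x⁻¹ ^ (2 ^ n : ℕ) * q⁻¹ := by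
        rw [hu]; exact hcp q x⁻¹ (2 ^ n)
      rw [this, inv_pow]
      group
    have h2 : ℓ (u ^ (2 ^ n : ℕ) * x ^ (2 ^ n : ℕ)) ≤ ℓ q + (ℓ q⁻¹ + c) := by
      rw [e2]
      calc ℓ (q * ((x ^ (2 ^ n : ℕ))⁻¹ * q⁻¹ * ((x ^ (2 ^ n : ℕ))⁻¹)⁻¹))
          ≤ ℓ q + ℓ ((x ^ (2 ^ n : ℕ))⁻¹ * q⁻¹ * ((x ^ (2 ^ n : ℕ))⁻¹)⁻¹) := htri _ _
        _ ≤ ℓ q + (ℓ q⁻¹ + c) := by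
            have := hconj (x ^ (2 ^ n : ℕ))⁻¹ q⁻¹
            linarith
    -- triangle inequality on the four factors
    have h3 : ℓ (u ^ (2 ^ n : ℕ) * x ^ (2 ^ n : ℕ) * B * C)
        ≤ ℓ (u ^ (2 ^ n : ℕ) * x ^ (2 ^ n : ℕ)) + ℓ B + ℓ C := by
      have t1 := htri (u ^ (2 ^ n : ℕ) * x ^ (2 ^ n : ℕ) * B) C
      have t2 := htri (u ^ (2 ^ n : ℕ) * x ^ (2 ^ n : ℕ)) B
      linarith
    -- lower bound from iterated squaring
    have h4 := hsqpow a (n + 1)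
    -- cast: ((2^n : ℕ) : ℝ) = 2^n
    have hcast : ((2 ^ n : ℕ) : ℝ) = (2 : ℝ) ^ n := by push_cast; ring
    rw [hcast] at hBl hCl
    have e3 : (2 : ℝ) ^ (n + 1) = 2 * (2 : ℝ) ^ n := by ring
    rw [e3] at h4
    nlinarith [pow_pos (by norm_num : (0:ℝ) < 2) n]
  -- let n → ∞
  have hfinal : 2 * ℓ a - (ℓ b1 + ℓ b2) - 4 * c ≤ 0 := by
    by_contra hcon
    push_neg at hcon
    obtain ⟨n, hn⟩ := exists_nat_gt
      ((ℓ q + ℓ q⁻¹ + 3 * c) / (2 * ℓ a - (ℓ b1 + ℓ b2) - 4 * c))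
    have hn2 : (n : ℝ) ≤ (2 : ℝ) ^ n := by
      have := Nat.lt_two_pow_self (n := n)
      exact_mod_cast this.le
    have h5 := key n
    have h6 := (div_lt_iff₀ hcon).mp (lt_of_lt_of_le hn hn2)
    linarith [mul_le_mul_of_nonneg_right hn2 hcon.le]
  linarith
end

section
/- Let G be a group, c ∈ ℝ, and ‖·‖ : G → ℝ a function satisfying hypotheses (i) and (ii) with constant c. Fix x, y ∈ G and set A := max(‖x‖, ‖x⁻¹‖) + (1/2)·max(‖[x,y]‖, ‖[x,y]⁻¹‖). Then for every natural number n ≥ 0 one has ‖[x,y]ⁿ‖ ≤ A·√(2n) + ‖e‖ + 4cn. -/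
section HLF
variable {G : Type*} [Group G] {c : ℝ} {ℓ : G → ℝ}

private lemma hlf_one_nonneg (htri : ∀ x y : G, ℓ (x * y) ≤ ℓ x + ℓ y) :
    0 ≤ ℓ (1 : G) := by
  have := htri 1 1; simp at this; linarith

private lemma hlf_c_nonneg (htri : ∀ x y : G, ℓ (x * y) ≤ ℓ x + ℓ y)
    (hsq : ∀ x : G, 2 * ℓ x - c ≤ ℓ (x ^ 2)) : 0 ≤ c := by
  have h1 := hsq (1 : G); simp at h1
  have h0 := hlf_one_nonneg htri
  linarith

private lemma hlf_pow_le (htri : ∀ x y : G, ℓ (x * y) ≤ ℓ x + ℓ y) (g : G) :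
    ∀ n : ℕ, 1 ≤ n → ℓ (g ^ n) ≤ n * ℓ g := by
  intro n hn
  induction n with
  | zero => omega
  | succ m ih =>
    rcases Nat.eq_or_lt_of_le hn with h | h
    · simp [← h]
    · have hm : 1 ≤ m := by omega
      have h2 := htri (g ^ m) g
      rw [← pow_succ] at h2
      push_cast
      nlinarith [ih hm]

private lemma hlf_sq_chain (htri : ∀ x y : G, ℓ (x * y) ≤ ℓ x + ℓ y)
    (hsq : ∀ x : G, 2 * ℓ x - c ≤ ℓ (x ^ 2)) (u : G) :
    ∀ k : ℕ, ℓ u ≤ ℓ (u ^ 2 ^ k) / 2 ^ k + c := by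
  have hc : 0 ≤ c := hlf_c_nonneg htri hsq
  intro k
  induction k generalizing u with
  | zero => simpa using by linarith [le_refl (ℓ u)]
  | succ m ih =>
    have h1 : 2 * ℓ u - c ≤ ℓ (u ^ 2) := hsq u
    have h2 : ℓ (u ^ 2) ≤ ℓ ((u ^ 2) ^ 2 ^ m) / 2 ^ m + c := ih (u ^ 2)
    have h3 : (u ^ 2) ^ 2 ^ m = u ^ 2 ^ (m + 1) := by
      rw [← pow_mul]; ring_nf
    rw [h3] at h2
    have hpow : (0:ℝ) < 2 ^ m := by positivity
    have h4 : ℓ u ≤ (ℓ (u ^ 2 ^ (m+1)) / 2 ^ m + c + c) / 2 := by linarith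
    calc ℓ u ≤ (ℓ (u ^ 2 ^ (m+1)) / 2 ^ m + c + c) / 2 := h4
    _ = ℓ (u ^ 2 ^ (m+1)) / 2 ^ (m+1) + c := by ring

private lemma hlf_conj_le (htri : ∀ x y : G, ℓ (x * y) ≤ ℓ x + ℓ y)
    (hsq : ∀ x : G, 2 * ℓ x - c ≤ ℓ (x ^ 2)) (g u : G) :
    ℓ (g * u * g⁻¹) ≤ ℓ u + c := by
  have key : ∀ k : ℕ, ℓ (g * u * g⁻¹) ≤ (ℓ g + ℓ g⁻¹) / 2 ^ k + (ℓ u + c) := by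
    intro k
    have h1 := hlf_sq_chain htri hsq (g * u * g⁻¹) k
    have h2 : (g * u * g⁻¹) ^ 2 ^ k = g * u ^ 2 ^ k * g⁻¹ := conj_pow
    rw [h2] at h1
    have h3 : ℓ (g * u ^ 2 ^ k * g⁻¹) ≤ ℓ g + ℓ (u ^ 2 ^ k) + ℓ g⁻¹ := by
      have ha := htri (g * u ^ 2 ^ k) g⁻¹
      have hb := htri g (u ^ 2 ^ k)
      linarith
    have h4 : ℓ (u ^ 2 ^ k) ≤ (2:ℝ) ^ k * ℓ u := by
      have h := hlf_pow_le htri u (2 ^ k) (Nat.two_pow_pos k)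
      calc ℓ (u ^ 2 ^ k) ≤ ((2 ^ k : ℕ) : ℝ) * ℓ u := h
      _ = (2:ℝ) ^ k * ℓ u := by push_cast; ring
    have hpow : (0:ℝ) < 2 ^ k := by positivity
    have h5 : ℓ (g * u ^ 2 ^ k * g⁻¹) / 2 ^ k
        ≤ (ℓ g + ℓ g⁻¹ + 2 ^ k * ℓ u) / 2 ^ k := by gcongr; linarith
    have h6 : (ℓ g + ℓ g⁻¹ + 2 ^ k * ℓ u) / 2 ^ k = (ℓ g + ℓ g⁻¹) / 2 ^ k + ℓ u := by
      field_simp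
    linarith
  apply le_of_forall_pos_le_add
  intro ε hε
  have hD : 0 ≤ ℓ g + ℓ g⁻¹ := by
    have h1 := htri g g⁻¹; simp at h1
    have h2 := hlf_one_nonneg htri; linarith
  obtain ⟨k, hk⟩ := pow_unbounded_of_one_lt ((ℓ g + ℓ g⁻¹) / ε) (one_lt_two (α := ℝ))
  have hpow : (0:ℝ) < 2 ^ k := by positivity
  have h6 : (ℓ g + ℓ g⁻¹) / 2 ^ k < ε := by
    rw [div_lt_iff₀ hpow]
    rw [div_lt_iff₀ hε] at hk
    nlinarith
  have := key k
  linarith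

/-- Key halving: `ℓ [u,v] ≤ ℓ [u,v²] / 2 + 2c`. -/
private lemma hlf_key (htri : ∀ x y : G, ℓ (x * y) ≤ ℓ x + ℓ y)
    (hsq : ∀ x : G, 2 * ℓ x - c ≤ ℓ (x ^ 2)) (u v : G) :
    ℓ (u * v * u⁻¹ * v⁻¹) ≤ ℓ (u * (v * v) * u⁻¹ * (v * v)⁻¹) / 2 + 2 * c := by
  set W := u * v * u⁻¹ * v⁻¹ with hW
  set Z := u * (v * v) * u⁻¹ * (v * v)⁻¹ with hZ
  have hE : ℓ (v * W * v⁻¹ * W) ≤ ℓ Z + c := by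
    have hid : v * W * v⁻¹ * W = W⁻¹ * Z * (W⁻¹)⁻¹ := by
      rw [hW, hZ]; group
    rw [hid]
    exact hlf_conj_le htri hsq W⁻¹ Z
  have peel : ∀ m : ℕ, ℓ ((v * W ^ m * v⁻¹) * W ^ m) ≤ ℓ (1:G) + m * (ℓ Z + 2 * c) := by
    intro m
    induction m with
    | zero => simp
    | succ r ih =>
      have hid : (v * W ^ (r+1) * v⁻¹) * W ^ (r+1)
          = ((v * W ^ r * v⁻¹) * (v * W * v⁻¹ * W) * (v * W ^ r * v⁻¹)⁻¹)
            * ((v * W ^ r * v⁻¹) * W ^ r) := by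
        rw [pow_succ W r]; group
      rw [hid]
      have h1 := htri ((v * W ^ r * v⁻¹) * (v * W * v⁻¹ * W) * (v * W ^ r * v⁻¹)⁻¹)
        ((v * W ^ r * v⁻¹) * W ^ r)
      have h2 : ℓ ((v * W ^ r * v⁻¹) * (v * W * v⁻¹ * W) * (v * W ^ r * v⁻¹)⁻¹)
          ≤ ℓ (v * W * v⁻¹ * W) + c :=
        hlf_conj_le htri hsq (v * W ^ r * v⁻¹) (v * W * v⁻¹ * W)
      push_cast
      nlinarith [ih, hE]
  have transfer : ∀ m : ℕ, ℓ (W ^ (2 * m)) ≤ ℓ v + ℓ v⁻¹ + c + ℓ ((v * W ^ m * v⁻¹) * W ^ m) := by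
    intro m
    have hid : W ^ (2 * m)
        = (W ^ m * v * (W ^ m)⁻¹ * v⁻¹) * ((v * W ^ m * v⁻¹) * W ^ m) := by
      rw [two_mul, pow_add]; group
    rw [hid]
    have h1 := htri (W ^ m * v * (W ^ m)⁻¹ * v⁻¹) ((v * W ^ m * v⁻¹) * W ^ m)
    have h2 := htri (W ^ m * v * (W ^ m)⁻¹) v⁻¹
    have h3 : ℓ (W ^ m * v * (W ^ m)⁻¹) ≤ ℓ v + c := hlf_conj_le htri hsq (W ^ m) v
    linarith
  have main : ∀ k : ℕ, ℓ W ≤ (ℓ v + ℓ v⁻¹ + c + ℓ (1:G)) / 2 ^ (k+1)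
      + (ℓ Z + 2 * c) / 2 + c := by
    intro k
    have h1 := hlf_sq_chain htri hsq W (k + 1)
    have hexp : (2:ℕ) ^ (k+1) = 2 * 2 ^ k := by rw [pow_succ]; ring
    rw [hexp] at h1
    have hT := transfer (2 ^ k)
    have hP := peel (2 ^ k)
    have hcast : (((2:ℕ) ^ k : ℕ) : ℝ) = (2:ℝ) ^ k := by push_cast; ring
    rw [hcast] at hP
    have h4 : ℓ (W ^ (2 * 2 ^ k)) ≤ (ℓ v + ℓ v⁻¹ + c + ℓ (1:G)) + (2:ℝ) ^ k * (ℓ Z + 2 * c) := by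
      linarith
    have hpos : (0:ℝ) < 2 ^ (k+1) := by positivity
    have h5 : ℓ (W ^ (2 * 2 ^ k)) / 2 ^ (k+1)
        ≤ ((ℓ v + ℓ v⁻¹ + c + ℓ (1:G)) + (2:ℝ) ^ k * (ℓ Z + 2 * c)) / 2 ^ (k+1) := by
      gcongr
    have hne : ((2:ℝ) ^ k) ≠ 0 := by positivity
    have h6 : ((ℓ v + ℓ v⁻¹ + c + ℓ (1:G)) + (2:ℝ) ^ k * (ℓ Z + 2 * c)) / 2 ^ (k+1)
        = (ℓ v + ℓ v⁻¹ + c + ℓ (1:G)) / 2 ^ (k+1) + (ℓ Z + 2 * c) / 2 := by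
      rw [pow_succ]
      field_simp
    rw [h6] at h5
    linarith
  apply le_of_forall_pos_le_add
  intro ε hε
  have hD : 0 ≤ ℓ v + ℓ v⁻¹ + c + ℓ (1:G) := by
    have h1 := htri v v⁻¹; simp at h1
    have h2 := hlf_one_nonneg htri
    have h3 := hlf_c_nonneg htri hsq
    linarith
  obtain ⟨k, hk⟩ := pow_unbounded_of_one_lt
    ((ℓ v + ℓ v⁻¹ + c + ℓ (1:G)) / ε) (one_lt_two (α := ℝ))
  have hpow : (0:ℝ) < 2 ^ (k+1) := by positivity
  have h2k : (0:ℝ) < 2 ^ k := by positivity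
  have h7 : (ℓ v + ℓ v⁻¹ + c + ℓ (1:G)) / 2 ^ (k+1) < ε := by
    rw [div_lt_iff₀ hpow]
    rw [div_lt_iff₀ hε] at hk
    rw [pow_succ]
    nlinarith [mul_pos h2k hε]
  have h8 := main k
  have harr : (ℓ Z + 2*c)/2 + c = ℓ Z / 2 + 2*c := by ring
  linarith

/-- `ℓ [u,v] ≤ 4c`. -/
private lemma hlf_comm_le (htri : ∀ x y : G, ℓ (x * y) ≤ ℓ x + ℓ y)
    (hsq : ∀ x : G, 2 * ℓ x - c ≤ ℓ (x ^ 2)) (u v : G) :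
    ℓ (u * v * u⁻¹ * v⁻¹) ≤ 4 * c := by
  have hc : 0 ≤ c := hlf_c_nonneg htri hsq
  have iter : ∀ r : ℕ, ∀ v : G,
      ℓ (u * v * u⁻¹ * v⁻¹) ≤ (ℓ u + ℓ u⁻¹ + c) / 2 ^ r + (1 - (1/2) ^ r) * (4 * c) := by
    intro r
    induction r with
    | zero =>
      intro v
      have h1 : u * v * u⁻¹ * v⁻¹ = u * (v * u⁻¹ * v⁻¹) := by group
      rw [h1]
      have h2 := htri u (v * u⁻¹ * v⁻¹)
      have h3 : ℓ (v * u⁻¹ * v⁻¹) ≤ ℓ u⁻¹ + c := hlf_conj_le htri hsq v u⁻¹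
      simp only [pow_zero]
      linarith
    | succ r ih =>
      intro v
      have h1 := hlf_key htri hsq u v
      have h2 := ih (v * v)
      have h3 : ℓ (u * v * u⁻¹ * v⁻¹)
          ≤ ((ℓ u + ℓ u⁻¹ + c) / 2 ^ r + (1 - (1/2) ^ r) * (4 * c)) / 2 + 2 * c := by
        linarith
      have harith : ((ℓ u + ℓ u⁻¹ + c) / 2 ^ r + (1 - (1/2) ^ r) * (4 * c)) / 2 + 2 * c
          = (ℓ u + ℓ u⁻¹ + c) / 2 ^ (r+1) + (1 - (1/2) ^ (r+1)) * (4 * c) := by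
        have hne : ((2:ℝ) ^ r) ≠ 0 := by positivity
        rw [pow_succ, pow_succ]
        field_simp
        ring
      rw [harith] at h3
      exact h3
  apply le_of_forall_pos_le_add
  intro ε hε
  have hD : 0 ≤ ℓ u + ℓ u⁻¹ + c := by
    have h1 := htri u u⁻¹; simp at h1
    have h2 := hlf_one_nonneg htri
    linarith
  obtain ⟨k, hk⟩ := pow_unbounded_of_one_lt ((ℓ u + ℓ u⁻¹ + c) / ε) (one_lt_two (α := ℝ))
  have hpow : (0:ℝ) < 2 ^ k := by positivity
  have h7 : (ℓ u + ℓ u⁻¹ + c) / 2 ^ k < ε := by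
    rw [div_lt_iff₀ hpow]
    rw [div_lt_iff₀ hε] at hk
    nlinarith
  have h8 := iter k v
  have h9 : (1 - (1/2:ℝ) ^ k) * (4 * c) ≤ 4 * c := by
    have h10 : (0:ℝ) ≤ (1/2:ℝ) ^ k := by positivity
    nlinarith
  linarith

end HLF

/-- Quantitative bound: `ℓ ([x,y]^n) ≤ A √(2n) + ℓ e + 4 c n`, where
`A = max(ℓ x, ℓ x⁻¹) + (1/2) max(ℓ [x,y], ℓ [x,y]⁻¹)`. -/
theorem commutator_pow_sqrt_bound {G : Type*} [Group G] (c : ℝ) (ℓ : G → ℝ)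
    (htri : ∀ x y : G, ℓ (x * y) ≤ ℓ x + ℓ y)
    (hsq : ∀ x : G, 2 * ℓ x - c ≤ ℓ (x ^ 2))
    (x y : G) (A : ℝ)
    (hA : A = max (ℓ x) (ℓ x⁻¹)
        + (1 / 2) * max (ℓ (x * y * x⁻¹ * y⁻¹)) (ℓ (x * y * x⁻¹ * y⁻¹)⁻¹)) :
    ∀ n : ℕ, ℓ ((x * y * x⁻¹ * y⁻¹) ^ n) ≤ A * Real.sqrt (2 * n) + ℓ 1 + 4 * c * n := by
  intro n
  have hone := hlf_one_nonneg htri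
  have hc := hlf_c_nonneg htri hsq
  have hA0 : 0 ≤ A := by
    have h1 : ℓ (1:G) ≤ ℓ x + ℓ x⁻¹ := by
      have := htri x x⁻¹; simp at this; linarith
    have h2 : ℓ (1:G) ≤ ℓ (x * y * x⁻¹ * y⁻¹) + ℓ (x * y * x⁻¹ * y⁻¹)⁻¹ := by
      have hinv : (x * y * x⁻¹ * y⁻¹) * (x * y * x⁻¹ * y⁻¹)⁻¹ = 1 := by group
      have h := htri (x * y * x⁻¹ * y⁻¹) (x * y * x⁻¹ * y⁻¹)⁻¹
      rw [hinv] at h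
      linarith
    have h3 : 0 ≤ max (ℓ x) (ℓ x⁻¹) := by
      rcases le_total (ℓ x) (ℓ x⁻¹) with h | h
      · rw [max_eq_right h]; linarith
      · rw [max_eq_left h]; linarith
    have h4 : 0 ≤ max (ℓ (x * y * x⁻¹ * y⁻¹)) (ℓ (x * y * x⁻¹ * y⁻¹)⁻¹) := by
      rcases le_total (ℓ (x * y * x⁻¹ * y⁻¹)) (ℓ (x * y * x⁻¹ * y⁻¹)⁻¹) with h | h
      · rw [max_eq_right h]; linarith
      · rw [max_eq_left h]; linarith
    rw [hA]; linarith
  have hsqrt : 0 ≤ Real.sqrt (2 * n) := Real.sqrt_nonneg _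
  have hAs : 0 ≤ A * Real.sqrt (2 * n) := mul_nonneg hA0 hsqrt
  rcases Nat.eq_zero_or_pos n with hn | hn
  · subst hn
    simp only [pow_zero, Nat.cast_zero, mul_zero, Real.sqrt_zero]
    simp only [Nat.cast_zero, mul_zero] at hAs ⊢
    linarith
  · have h1 : ℓ ((x * y * x⁻¹ * y⁻¹) ^ n) ≤ n * ℓ (x * y * x⁻¹ * y⁻¹) :=
      hlf_pow_le htri _ n hn
    have h2 : ℓ (x * y * x⁻¹ * y⁻¹) ≤ 4 * c := hlf_comm_le htri hsq x y
    have hn0 : (0:ℝ) ≤ n := by positivity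
    have h3 : (n:ℝ) * ℓ (x * y * x⁻¹ * y⁻¹) ≤ (n:ℝ) * (4 * c) := by nlinarith
    nlinarith
end

section
/- Let ‖·‖ be a homogeneous pseudo-length function on a group G. Then ‖x‖ = 0 for every element x of the commutator subgroup [G,G]; consequently, ‖x‖ = ‖y‖ whenever x·y⁻¹ ∈ [G,G], i.e., ‖·‖ factors through the abelianization of G. -/
/-- A homogeneous pseudo-length function vanishes on the commutator subgroup, and hence
factors through the abelianization. -/
theorem homogeneous_pseudo_length_vanishes_on_commutator {G : Type*} [Group G] (ℓ : G → ℝ)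
    (hnonneg : ∀ x : G, 0 ≤ ℓ x)
    (hone : ℓ 1 = 0)
    (hinv : ∀ x : G, ℓ x⁻¹ = ℓ x)
    (htri : ∀ x y : G, ℓ (x * y) ≤ ℓ x + ℓ y)
    (hhom : ∀ (x : G) (n : ℤ), ℓ (x ^ n) = |(n : ℝ)| * ℓ x) :
    (∀ x ∈ commutator G, ℓ x = 0) ∧
    (∀ x y : G, x * y⁻¹ ∈ commutator G → ℓ x = ℓ y) := by
  -- natural-power homogeneity
  have hpow : ∀ (x : G) (n : ℕ), ℓ (x ^ n) = n * ℓ x := by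
    intro x n
    have h := hhom x n
    rw [zpow_natCast] at h
    rwa [Int.cast_natCast, Nat.abs_cast] at h
  -- limiting lemma
  have hlim : ∀ A B C : ℝ, 0 ≤ C → (∀ n : ℕ, 0 < n → A ≤ B + C / n) → A ≤ B := by
    intro A B C hC h
    by_contra hAB
    push_neg at hAB
    obtain ⟨n, hn⟩ := exists_nat_gt (C / (A - B))
    have hAB' : 0 < A - B := by linarith
    have hn0 : 0 < n := by
      by_contra hn0
      push_neg at hn0
      interval_cases n
      · simp only [Nat.cast_zero] at hn
        have := div_nonneg hC (le_of_lt hAB')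
        linarith
    have hcast : (0:ℝ) < n := by exact_mod_cast hn0
    have h1 := h n hn0
    have h2 : C / (A - B) < n := hn
    have h3 : C < n * (A - B) := by
      rwa [div_lt_iff₀ hAB'] at h2
    have h4 : C / n < A - B := by
      rw [div_lt_iff₀ hcast]
      nlinarith
    linarith
  -- conjugation invariance (≤)
  have hconj_le : ∀ g h : G, ℓ (g * h * g⁻¹) ≤ ℓ h := by
    intro g h
    refine hlim _ _ (2 * ℓ g) (by have := hnonneg g; linarith) ?_
    intro n hn
    have hcast : (0:ℝ) < n := by exact_mod_cast hn
    have h1 : ℓ ((g * h * g⁻¹) ^ n) = n * ℓ (g * h * g⁻¹) := hpow _ n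
    rw [conj_pow] at h1
    have h2 : ℓ (g * h ^ n * g⁻¹) ≤ ℓ g + ℓ (h ^ n) + ℓ g := by
      calc ℓ (g * h ^ n * g⁻¹) ≤ ℓ (g * h ^ n) + ℓ g⁻¹ := htri _ _
        _ ≤ ℓ g + ℓ (h ^ n) + ℓ g := by
            rw [hinv]; have := htri g (h ^ n); linarith
    rw [hpow h n] at h2
    rw [h1] at h2
    have h5 : ℓ (g * h * g⁻¹) - ℓ h ≤ (2 * ℓ g) / n := by
      rw [le_div_iff₀ hcast]
      nlinarith
    linarith
  -- conjugation invariance (=)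
  have hconj : ∀ g h : G, ℓ (g * h * g⁻¹) = ℓ h := by
    intro g h
    refine le_antisymm (hconj_le g h) ?_
    have h1 := hconj_le g⁻¹ (g * h * g⁻¹)
    have e : g⁻¹ * (g * h * g⁻¹) * g⁻¹⁻¹ = h := by group
    rwa [e] at h1
  -- cyclic invariance
  have hcyc : ∀ u v : G, ℓ (u * v) = ℓ (v * u) := by
    intro u v
    have h1 := hconj v (u * v)
    have e : v * (u * v) * v⁻¹ = v * u := by group
    rw [e] at h1
    exact h1.symm
  -- key power estimate: ℓ(xⁿcⁿ) ≤ n ℓ(x c), ℓ(cⁿxⁿ) ≤ n ℓ(x c)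
  have hW : ∀ x c : G, ∀ n : ℕ,
      ℓ (x ^ n * c ^ n) ≤ n * ℓ (x * c) ∧ ℓ (c ^ n * x ^ n) ≤ n * ℓ (x * c) := by
    intro x c n
    induction n with
    | zero => simp [hone]
    | succ n ih =>
      obtain ⟨ih1, ih2⟩ := ih
      constructor
      · have e : x ^ (n + 1) * c ^ (n + 1) = x ^ n * (x * c * c ^ n) := by
          rw [pow_succ, pow_succ']
          simp [mul_assoc]
        rw [e, hcyc]
        calc ℓ (x * c * c ^ n * x ^ n) ≤ ℓ (x * c) + ℓ (c ^ n * x ^ n) := by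
              have := htri (x * c) (c ^ n * x ^ n)
              simpa [mul_assoc] using this
          _ ≤ ℓ (x * c) + n * ℓ (x * c) := by linarith
          _ = (n + 1 : ℕ) * ℓ (x * c) := by push_cast; ring
      · have e : c ^ (n + 1) * x ^ (n + 1) = c ^ n * (c * x * x ^ n) := by
          rw [pow_succ, pow_succ']
          simp [mul_assoc]
        rw [e, hcyc]
        calc ℓ (c * x * x ^ n * c ^ n) ≤ ℓ (c * x) + ℓ (x ^ n * c ^ n) := by
              have := htri (c * x) (x ^ n * c ^ n)
              simpa [mul_assoc] using this
          _ ≤ ℓ (x * c) + n * ℓ (x * c) := by rw [hcyc c x]; linarith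
          _ = (n + 1 : ℕ) * ℓ (x * c) := by push_cast; ring
  -- halving lemma: ℓ(x) ≤ ℓ(x · t x t⁻¹)/2
  have hhalf : ∀ x t : G, ℓ x ≤ ℓ (x * (t * x * t⁻¹)) / 2 := by
    intro x t
    set c := t * x * t⁻¹ with hc
    refine hlim _ _ (2 * ℓ t) (by have := hnonneg t; linarith) ?_
    intro n hn
    have hcast : (0:ℝ) < n := by exact_mod_cast hn
    have h1 : ℓ (x ^ (2 * n)) = (2 * n : ℕ) * ℓ x := hpow x (2 * n)
    have e1 : x ^ (2 * n) = x ^ n * (t⁻¹ * c ^ n * t) := by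
      rw [hc, conj_pow]
      rw [two_mul, pow_add]
      group
    have h2 : ℓ (x ^ n * (t⁻¹ * c ^ n * t)) ≤ ℓ (c ^ n * x ^ n) + 2 * ℓ t := by
      calc ℓ (x ^ n * (t⁻¹ * c ^ n * t))
          = ℓ (x ^ n * t⁻¹ * c ^ n * t) := by rw [mul_assoc, mul_assoc, mul_assoc]
        _ ≤ ℓ (x ^ n * t⁻¹ * c ^ n) + ℓ t := htri _ _
        _ = ℓ (c ^ n * (x ^ n * t⁻¹)) + ℓ t := by rw [hcyc (x ^ n * t⁻¹) (c ^ n)]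
        _ = ℓ (c ^ n * x ^ n * t⁻¹) + ℓ t := by rw [mul_assoc]
        _ ≤ ℓ (c ^ n * x ^ n) + ℓ t⁻¹ + ℓ t := by have := htri (c ^ n * x ^ n) t⁻¹; linarith
        _ = ℓ (c ^ n * x ^ n) + 2 * ℓ t := by rw [hinv]; ring
    have h3 : ℓ (c ^ n * x ^ n) ≤ n * ℓ (x * c) := (hW x c n).2
    rw [e1] at h1
    have h4 : (2 * n : ℝ) * ℓ x ≤ n * ℓ (x * c) + 2 * ℓ t := by
      push_cast at h1
      linarith
    have h5 : ℓ x - ℓ (x * c) / 2 ≤ (2 * ℓ t) / n := by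
      rw [le_div_iff₀ hcast]
      nlinarith [hnonneg t, h4]
    linarith
  -- commutators vanish
  have hcomm0 : ∀ a b : G, ℓ (a * b * a⁻¹ * b⁻¹) = 0 := by
    intro a b
    have hbd : ∀ t : G, ℓ (a * t * a⁻¹ * t⁻¹) ≤ 2 * ℓ a := by
      intro t
      have e : a * t * a⁻¹ * t⁻¹ = a * (t * a⁻¹ * t⁻¹) := by group
      calc ℓ (a * t * a⁻¹ * t⁻¹) = ℓ (a * (t * a⁻¹ * t⁻¹)) := by rw [e]
        _ ≤ ℓ a + ℓ (t * a⁻¹ * t⁻¹) := htri _ _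
        _ = ℓ a + ℓ a⁻¹ := by rw [hconj t a⁻¹]
        _ = 2 * ℓ a := by rw [hinv]; ring
    have hdbl : ∀ t : G, ℓ (a * t * a⁻¹ * t⁻¹) ≤ ℓ (a * (t * t) * a⁻¹ * (t * t)⁻¹) / 2 := by
      intro t
      have h1 := hhalf (a * t * a⁻¹ * t⁻¹) t
      have e : a * t * a⁻¹ * t⁻¹ * (t * (a * t * a⁻¹ * t⁻¹) * t⁻¹)
          = a * (t * t) * a⁻¹ * (t * t)⁻¹ := by group
      rwa [e] at h1
    have hiter : ∀ k : ℕ, ℓ (a * b * a⁻¹ * b⁻¹)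
        ≤ ℓ (a * b ^ (2 ^ k) * a⁻¹ * (b ^ (2 ^ k))⁻¹) / 2 ^ k := by
      intro k
      induction k with
      | zero => simp
      | succ k ih =>
        have h1 := hdbl (b ^ (2 ^ k))
        have e : b ^ (2 ^ k) * b ^ (2 ^ k) = b ^ (2 ^ (k + 1)) := by
          rw [← pow_add]
          congr 1
          rw [pow_succ]
          ring
        rw [e] at h1
        have h2pos : (0:ℝ) < 2 ^ k := by positivity
        calc ℓ (a * b * a⁻¹ * b⁻¹) ≤ ℓ (a * b ^ (2 ^ k) * a⁻¹ * (b ^ (2 ^ k))⁻¹) / 2 ^ k := ih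
          _ ≤ (ℓ (a * b ^ (2 ^ (k + 1)) * a⁻¹ * (b ^ (2 ^ (k + 1)))⁻¹) / 2) / 2 ^ k := by
              gcongr
          _ = ℓ (a * b ^ (2 ^ (k + 1)) * a⁻¹ * (b ^ (2 ^ (k + 1)))⁻¹) / 2 ^ (k + 1) := by
              rw [div_div, pow_succ]; ring_nf
    have hle : ∀ k : ℕ, ℓ (a * b * a⁻¹ * b⁻¹) ≤ 2 * ℓ a / 2 ^ k := by
      intro k
      refine (hiter k).trans ?_
      have h2pos : (0:ℝ) < 2 ^ k := by positivity
      gcongr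
      exact hbd _
    refine le_antisymm ?_ (hnonneg _)
    by_contra h
    push_neg at h
    obtain ⟨k, hk⟩ := pow_unbounded_of_one_lt (2 * ℓ a / ℓ (a * b * a⁻¹ * b⁻¹)) one_lt_two
    have h2pos : (0:ℝ) < 2 ^ k := by positivity
    have := hle k
    have h3 : 2 * ℓ a < 2 ^ k * ℓ (a * b * a⁻¹ * b⁻¹) := by
      rw [div_lt_iff₀ h] at hk
      linarith
    have h4 : 2 * ℓ a / 2 ^ k < ℓ (a * b * a⁻¹ * b⁻¹) := by
      rw [div_lt_iff₀ h2pos]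
      nlinarith
    linarith
  -- part 1
  have part1 : ∀ x ∈ commutator G, ℓ x = 0 := by
    intro x hx
    rw [commutator_eq_closure] at hx
    induction hx using Subgroup.closure_induction with
    | mem g hg =>
      obtain ⟨g₁, g₂, rfl⟩ := hg
      have : (open scoped commutatorElement in ⁅g₁, g₂⁆) = g₁ * g₂ * g₁⁻¹ * g₂⁻¹ := rfl
      rw [this]
      exact hcomm0 g₁ g₂
    | one => exact hone
    | mul u v hu hv ihu ihv =>
      refine le_antisymm ?_ (hnonneg _)
      calc ℓ (u * v) ≤ ℓ u + ℓ v := htri u v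
        _ = 0 := by rw [ihu, ihv]; ring
    | inv u hu ihu => rw [hinv]; exact ihu
  refine ⟨part1, ?_⟩
  intro x y hxy
  have h0 : ℓ (x * y⁻¹) = 0 := part1 _ hxy
  have h1 : ℓ x ≤ ℓ y := by
    have e : x = x * y⁻¹ * y := by group
    calc ℓ x = ℓ (x * y⁻¹ * y) := by rw [← e]
      _ ≤ ℓ (x * y⁻¹) + ℓ y := htri _ _
      _ = ℓ y := by rw [h0]; ring
  have h2 : ℓ y ≤ ℓ x := by
    have e : y = (x * y⁻¹)⁻¹ * x := by group
    calc ℓ y = ℓ ((x * y⁻¹)⁻¹ * x) := by rw [← e]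
      _ ≤ ℓ (x * y⁻¹)⁻¹ + ℓ x := htri _ _
      _ = ℓ x := by rw [hinv, h0]; ring
  linarith
end
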